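/- arXiv:2501.03369 — 5 statements merged into one kernel-verified Lean document; each statement's English description precedes it below -/
import Mathlib

section
/- Let D be a finite connected graph with a group G acting by graph automorphisms. If there exists a rigidity of D fixed by the G-action on the set of rigidities, then the number of rigidities of D is at most β(D) + 1, where β(D) is the Betti number of D. -/
/-- A *rigidity* of a graph `D` with respect to a group `G` acting on the vertices. -/
def IsRigidity {V : Type*} (G : Type*) [Group G] [MulAction G V]
    (D : SimpleGraph V) (R : Set V) : Prop :=
  ∃ H : Subgroup G,
    (∃ c : (D.induce (MulAction.fixedPoints H V)).ConnectedComponent,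
        R = Subtype.val '' c.supp) ∧
    ∀ v ∈ R, MulAction.stabilizer G v = H

private lemma step_lemma {V : Type*} {D : SimpleGraph V} {v w : V}
    (hr : D.Reachable v w) (hne : v ≠ w) :
    ∃ u, D.Adj v u ∧ D.dist u w + 1 = D.dist v w := by
  obtain ⟨p, hp⟩ := hr.exists_walk_length_eq_dist
  cases p with
  | nil => exact absurd rfl hne
  | @cons _ u _ h q =>
    refine ⟨u, h, ?_⟩
    have hq : D.dist u w ≤ q.length := SimpleGraph.dist_le q
    obtain ⟨q', hq'⟩ := q.reachable.exists_walk_length_eq_dist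
    have h2 : D.dist v w ≤ q'.length + 1 := by
      simpa using SimpleGraph.dist_le (SimpleGraph.Walk.cons h q')
    simp only [SimpleGraph.Walk.length_cons] at hp
    omega

private lemma rigid_mem_of_adj {V G : Type*} [Group G] [MulAction G V] {D : SimpleGraph V}
    {H : Subgroup G} {c : (D.induce (MulAction.fixedPoints H V)).ConnectedComponent}
    {u v : V} (hu : u ∈ MulAction.fixedPoints H V) (hv : v ∈ Subtype.val '' c.supp)
    (hadj : D.Adj u v) : u ∈ Subtype.val '' c.supp := by
  obtain ⟨a, ha, rfl⟩ := hv
  refine ⟨⟨u, hu⟩, ?_, rfl⟩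
  rw [SimpleGraph.ConnectedComponent.mem_supp_iff] at ha ⊢
  rw [← ha]
  apply SimpleGraph.ConnectedComponent.sound
  have hadj' : (D.induce (MulAction.fixedPoints H V)).Adj ⟨u, hu⟩ a := hadj
  exact hadj'.reachable

private lemma rigid_disjoint {V G : Type*} [Group G] [MulAction G V] {D : SimpleGraph V}
    {R R' : Set V} (hR : IsRigidity G D R) (hR' : IsRigidity G D R') {v : V}
    (hv : v ∈ R) (hv' : v ∈ R') : R = R' := by
  obtain ⟨H, ⟨c, rfl⟩, hs⟩ := hR
  obtain ⟨H', ⟨c', rfl⟩, hs'⟩ := hR'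
  have hHH' : H' = H := by rw [← hs v hv, ← hs' v hv']
  subst hHH'
  obtain ⟨a, ha, hav⟩ := hv
  obtain ⟨a', ha', ha'v⟩ := hv'
  have haa' : a = a' := Subtype.ext (hav.trans ha'v.symm)
  rw [SimpleGraph.ConnectedComponent.mem_supp_iff] at ha ha'
  rw [← ha, haa', ha']

/-- if some rigidity of the finite connected `G`-graph `D` is fixed by the
(image) action of `G` on the set of rigidities, then the number of rigidities of `D`
is at most `β(D) + 1`, where `β(D) = 1 - |V| + |E|` is the Betti number. -/
theorem stmt1 {V G : Type*} [Finite V] [Group G] [MulAction G V]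
    (D : SimpleGraph V)
    (hact : ∀ (g : G) (v w : V), D.Adj (g • v) (g • w) ↔ D.Adj v w)
    (hconn : D.Connected)
    (hfix : ∃ R : Set V, IsRigidity G D R ∧ ∀ g : G, (fun v => g • v) '' R = R) :
    ({R : Set V | IsRigidity G D R}.ncard : ℤ) ≤
      (1 - (Nat.card V : ℤ) + (D.edgeSet.ncard : ℤ)) + 1 := by
  classical
  obtain ⟨R₀, hrigR₀, hinv⟩ := hfix
  obtain ⟨H₀, ⟨c₀, hc₀⟩, hstab₀⟩ := id hrigR₀
  obtain ⟨a₀, ha₀⟩ := c₀.exists_rep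
  set x₀ : V := (a₀ : V) with hx₀def
  have hx₀ : x₀ ∈ R₀ := by
    rw [hc₀]
    exact ⟨a₀, by rw [SimpleGraph.ConnectedComponent.mem_supp_iff]; exact ha₀, rfl⟩
  -- membership in R₀ is G-invariant
  have hmem : ∀ (g : G) (v : V), v ∈ R₀ → g • v ∈ R₀ := by
    intro g v hv
    rw [← hinv g]
    exact ⟨v, hv, rfl⟩
  -- distance is G-invariant
  have hdist : ∀ (g : G) (a b : V), D.dist (g • a) (g • b) = D.dist a b := by
    have hle : ∀ (g : G) (a b : V), D.dist (g • a) (g • b) ≤ D.dist a b := by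
      intro g a b
      obtain ⟨p, hp⟩ := (hconn a b).exists_walk_length_eq_dist
      have := SimpleGraph.dist_le
        (p.map (⟨fun v => g • v, fun h => (hact g _ _).mpr h⟩ : D →g D))
      simpa [hp] using this
    intro g a b
    refine le_antisymm (hle g a b) ?_
    simpa using hle g⁻¹ (g • a) (g • b)
  have hR₀ne : R₀.Nonempty := ⟨x₀, hx₀⟩
  -- distance to the set R₀
  set sd : V → ℕ := fun v => sInf (Set.image (D.dist v) R₀) with hsddef
  have sdmem : ∀ v, ∃ u ∈ R₀, D.dist v u = sd v := by
    intro v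
    have hne : (Set.image (D.dist v) R₀).Nonempty := hR₀ne.image _
    obtain ⟨u, hu, he⟩ := Nat.sInf_mem hne
    exact ⟨u, hu, he⟩
  have sdle : ∀ v u, u ∈ R₀ → sd v ≤ D.dist v u := by
    intro v u hu
    exact Nat.sInf_le ⟨u, hu, rfl⟩
  have sdzero : ∀ v, sd v = 0 ↔ v ∈ R₀ := by
    intro v
    constructor
    · intro h
      obtain ⟨u, hu, he⟩ := sdmem v
      have : v = u := hconn.dist_eq_zero_iff.mp (he.trans h)
      rwa [this]
    · intro h
      have h1 : sd v ≤ D.dist v v := sdle v v h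
      simpa [SimpleGraph.dist_self] using h1
  have sdsmul : ∀ (g : G) (v : V), sd (g • v) = sd v := by
    have hle : ∀ (g : G) (v : V), sd (g • v) ≤ sd v := by
      intro g v
      obtain ⟨u, hu, he⟩ := sdmem v
      calc sd (g • v) ≤ D.dist (g • v) (g • u) := sdle _ _ (hmem g u hu)
        _ = D.dist v u := hdist g v u
        _ = sd v := he
    intro g v
    refine le_antisymm (hle g v) ?_
    simpa using hle g⁻¹ (g • v)
  -- parent step toward R₀ for vertices outside R₀
  have hparex : ∀ v : V, ∃ u : V, v ∉ R₀ → (D.Adj v u ∧ sd u + 1 = sd v) := by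
    intro v
    by_cases hv : v ∈ R₀
    · exact ⟨v, fun h => absurd hv h⟩
    · obtain ⟨u₀, hu₀, he⟩ := sdmem v
      have hne : v ≠ u₀ := by rintro rfl; exact hv hu₀
      obtain ⟨u, hadj, hd⟩ := step_lemma (hconn v u₀) hne
      refine ⟨u, fun _ => ⟨hadj, ?_⟩⟩
      have h1 : sd u ≤ D.dist u u₀ := sdle u u₀ hu₀
      have h2 : sd v ≤ sd u + 1 := by
        obtain ⟨w, hw, hew⟩ := sdmem u
        have h3 : D.dist v w ≤ D.dist u w + 1 := by
          obtain ⟨q, hq⟩ := (hconn u w).exists_walk_length_eq_dist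
          have := SimpleGraph.dist_le (SimpleGraph.Walk.cons hadj q)
          simpa [hq] using this
        calc sd v ≤ D.dist v w := sdle v w hw
          _ ≤ D.dist u w + 1 := h3
          _ = sd u + 1 := by rw [hew]
      omega
  choose par hpar using hparex
  -- subtree structure inside R₀
  have hRfix : ∀ v ∈ R₀, v ∈ MulAction.fixedPoints H₀ V := by
    intro v hv
    rw [hc₀] at hv
    obtain ⟨a, _, rfl⟩ := hv
    exact a.2
  set mfun : V → ℕ :=
    fun v => if h : v ∈ MulAction.fixedPoints H₀ V
      then (D.induce (MulAction.fixedPoints H₀ V)).dist ⟨v, h⟩ a₀ else 0 with hmdef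
  have hcomp : ∀ v (hv : v ∈ R₀),
      (⟨v, hRfix v hv⟩ : {x // x ∈ MulAction.fixedPoints H₀ V}) ∈ c₀.supp := by
    intro v hv
    rw [hc₀] at hv
    obtain ⟨a, ha, hav⟩ := hv
    have : (⟨v, hRfix v (hc₀ ▸ ⟨a, ha, hav⟩)⟩ :
        {x // x ∈ MulAction.fixedPoints H₀ V}) = a := Subtype.ext hav.symm
    rw [this]
    exact ha
  have hqex : ∀ v : V, ∃ u : V, v ∈ R₀ → v ≠ x₀ →
      (u ∈ R₀ ∧ D.Adj v u ∧ mfun u + 1 = mfun v) := by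
    intro v
    by_cases hv : v ∈ R₀ ∧ v ≠ x₀
    · obtain ⟨hv, hne⟩ := hv
      have hfv := hRfix v hv
      have hreach : (D.induce (MulAction.fixedPoints H₀ V)).Reachable ⟨v, hfv⟩ a₀ := by
        have h1 := hcomp v hv
        rw [SimpleGraph.ConnectedComponent.mem_supp_iff] at h1
        rw [← ha₀] at h1
        exact (SimpleGraph.ConnectedComponent.eq).mp h1
      have hne' : (⟨v, hfv⟩ : {x // x ∈ MulAction.fixedPoints H₀ V}) ≠ a₀ := by
        intro h
        exact hne (congrArg Subtype.val h)
      obtain ⟨u, hadj, hd⟩ := step_lemma hreach hne'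
      have huR : (u : V) ∈ R₀ := by
        rw [hc₀]
        refine ⟨u, ?_, rfl⟩
        rw [SimpleGraph.ConnectedComponent.mem_supp_iff]
        have h1 := hcomp v hv
        rw [SimpleGraph.ConnectedComponent.mem_supp_iff] at h1
        rw [← h1]
        exact (SimpleGraph.ConnectedComponent.eq).mpr hadj.symm.reachable
      refine ⟨u, fun _ _ => ⟨huR, ?_, ?_⟩⟩
      · exact hadj
      · have e1 : mfun v = (D.induce (MulAction.fixedPoints H₀ V)).dist ⟨v, hfv⟩ a₀ := by
          simp only [hmdef, dif_pos hfv]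
        have e2 : mfun (u : V) = (D.induce (MulAction.fixedPoints H₀ V)).dist u a₀ := by
          simp only [hmdef, dif_pos u.2]
        rw [e1, e2]
        exact hd
    · exact ⟨v, fun h1 h2 => absurd ⟨h1, h2⟩ hv⟩
  choose qar hqar using hqex
  -- data for each rigidity other than R₀
  have hBdata : ∀ R : Set V, ∃ x w : V,
      R ∈ {R : Set V | IsRigidity G D R} \ {R₀} →
      (x ∈ R ∧ D.Adj x w ∧ sd w + 1 = sd x ∧ w ≠ par x ∧ 1 ≤ sd x) := by
    intro R
    by_cases hR : R ∈ {R : Set V | IsRigidity G D R} \ {R₀}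
    · obtain ⟨hRrig, hRne⟩ := hR
      obtain ⟨H, ⟨c, hc⟩, hstab⟩ := id hRrig
      have hRnonempty : R.Nonempty := by
        obtain ⟨a, ha⟩ := c.exists_rep
        refine ⟨(a : V), ?_⟩
        rw [hc]
        exact ⟨a, by rw [SimpleGraph.ConnectedComponent.mem_supp_iff]; exact ha, rfl⟩
      obtain ⟨x, hxR, hxmin⟩ := Nat.sInf_mem (hRnonempty.image sd)
      have hmin : ∀ y ∈ R, sd x ≤ sd y := by
        intro y hy
        rw [hxmin]
        exact Nat.sInf_le ⟨y, hy, rfl⟩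
      have hsx : 1 ≤ sd x := by
        rcases Nat.eq_zero_or_pos (sd x) with h0 | h
        · exfalso
          have hxR₀ : x ∈ R₀ := (sdzero x).mp h0
          exact hRne (rigid_disjoint hRrig hrigR₀ hxR hxR₀)
        · exact h
      have hxnotR₀ : x ∉ R₀ := by
        intro h
        have := (sdzero x).mpr h
        omega
      obtain ⟨hadjp, hdp⟩ := hpar x hxnotR₀
      have hu_not_R : par x ∉ R := by
        intro huR
        have := hmin (par x) huR
        omega
      have hu_not_fix : par x ∉ MulAction.fixedPoints H V := by
        intro hfix'
        apply hu_not_R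
        rw [hc] at hxR ⊢
        exact rigid_mem_of_adj hfix' hxR hadjp.symm
      rw [MulAction.mem_fixedPoints] at hu_not_fix
      push_neg at hu_not_fix
      obtain ⟨h, hh⟩ := hu_not_fix
      rw [Subgroup.smul_def] at hh
      have hxfix : (h : G) • x = x := by
        have hmem' : (h : G) ∈ MulAction.stabilizer G x := by
          rw [hstab x hxR]
          exact h.2
        exact hmem'
      refine ⟨x, (h : G) • par x, fun _ => ⟨hxR, ?_, ?_, hh, hsx⟩⟩
      · have := (hact (h : G) x (par x)).mpr hadjp
        rwa [hxfix] at this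
      · rw [sdsmul]
        exact hdp
    · exact ⟨x₀, x₀, fun h => absurd h hR⟩
  choose xf wf hBspec using hBdata
  -- the two edge families
  set f : V → Sym2 V := fun v => if v ∈ R₀ then s(v, qar v) else s(v, par v) with hfdef
  set F : Set V → Sym2 V := fun R => s(xf R, wf R) with hFdef
  set A : Set V := Set.univ \ {x₀} with hAdef
  set B : Set (Set V) := {R : Set V | IsRigidity G D R} \ {R₀} with hBdef
  -- basic facts about f
  have hfA : ∀ v ∈ A, ∀ a ∈ (f v : Sym2 V), (v ∈ R₀ → a ∈ R₀) := by
    intro v hv a ha hvR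
    rw [hfdef] at ha
    simp only [if_pos hvR] at ha
    rcases Sym2.mem_iff.mp ha with rfl | rfl
    · exact hvR
    · exact (hqar v hvR (by simpa [hAdef] using hv)).1
  -- injectivity of f on A
  have hfinj : Set.InjOn f A := by
    intro v hv w hw heq
    have hvne : v ≠ x₀ := by simpa [hAdef] using hv
    have hwne : w ≠ x₀ := by simpa [hAdef] using hw
    by_cases hvR : v ∈ R₀ <;> by_cases hwR : w ∈ R₀
    · obtain ⟨hq1, _, hq3⟩ := hqar v hvR hvne
      obtain ⟨hq1', _, hq3'⟩ := hqar w hwR hwne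
      rw [hfdef] at heq
      simp only [if_pos hvR, if_pos hwR, Sym2.eq_iff] at heq
      rcases heq with ⟨h1, _⟩ | ⟨h1, h2⟩
      · exact h1
      · exfalso
        rw [← h1] at hq3'
        rw [h2] at hq3
        omega
    · exfalso
      obtain ⟨hq1, _, _⟩ := hqar v hvR hvne
      rw [hfdef] at heq
      simp only [if_pos hvR, if_neg hwR, Sym2.eq_iff] at heq
      rcases heq with ⟨h1, _⟩ | ⟨_, h2⟩
      · rw [h1] at hvR; exact hwR hvR
      · rw [h2] at hq1; exact hwR hq1
    · exfalso
      obtain ⟨hq1, _, _⟩ := hqar w hwR hwne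
      rw [hfdef] at heq
      simp only [if_neg hvR, if_pos hwR, Sym2.eq_iff] at heq
      rcases heq with ⟨h1, _⟩ | ⟨h1, _⟩
      · rw [h1] at hvR; exact hvR hwR
      · rw [h1] at hvR; exact hvR hq1
    · obtain ⟨_, hp3⟩ := hpar v hvR
      obtain ⟨_, hp3'⟩ := hpar w hwR
      rw [hfdef] at heq
      simp only [if_neg hvR, if_neg hwR, Sym2.eq_iff] at heq
      rcases heq with ⟨h1, _⟩ | ⟨h1, h2⟩
      · exact h1
      · exfalso
        rw [← h1] at hp3'
        rw [h2] at hp3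
        omega
  -- injectivity of F on B
  have hFinj : Set.InjOn F B := by
    intro R hR R' hR' heq
    obtain ⟨hx1, _, hx3, _, _⟩ := hBspec R hR
    obtain ⟨hx1', _, hx3', _, _⟩ := hBspec R' hR'
    rw [hFdef] at heq
    simp only [Sym2.eq_iff] at heq
    rcases heq with ⟨h1, _⟩ | ⟨h1, h2⟩
    · refine rigid_disjoint hR.1 hR'.1 ?_ hx1'
      rw [← h1]; exact hx1
    · exfalso
      rw [← h1] at hx3'
      rw [h2] at hx3
      omega
  -- ranges are disjoint
  have hdisj : Disjoint (f '' A) (F '' B) := by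
    rw [Set.disjoint_left]
    rintro e ⟨v, hv, rfl⟩ ⟨R, hR, hFR⟩
    have hvne : v ≠ x₀ := by simpa [hAdef] using hv
    obtain ⟨hx1, _, hx3, hx4, hx5⟩ := hBspec R hR
    have hxnotR₀ : xf R ∉ R₀ := by
      intro h
      have := (sdzero (xf R)).mpr h
      omega
    by_cases hvR : v ∈ R₀
    · obtain ⟨hq1, _, _⟩ := hqar v hvR hvne
      rw [hfdef, hFdef] at hFR
      simp only [if_pos hvR, Sym2.eq_iff] at hFR
      rcases hFR with ⟨h1, _⟩ | ⟨h1, _⟩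
      · exact hxnotR₀ (by rw [h1]; exact hvR)
      · exact hxnotR₀ (by rw [h1]; exact hq1)
    · obtain ⟨_, hp3⟩ := hpar v hvR
      rw [hfdef, hFdef] at hFR
      simp only [if_neg hvR, Sym2.eq_iff] at hFR
      rcases hFR with ⟨h1, h2⟩ | ⟨h1, h2⟩
      · rw [h1] at hx4
        exact hx4 h2
      · rw [h1, h2] at hx3
        omega
  -- both families consist of edges
  have hfedge : f '' A ⊆ D.edgeSet := by
    rintro e ⟨v, hv, rfl⟩
    have hvne : v ≠ x₀ := by simpa [hAdef] using hv
    by_cases hvR : v ∈ R₀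
    · obtain ⟨_, hq2, _⟩ := hqar v hvR hvne
      rw [hfdef]
      simp only [if_pos hvR]
      exact hq2
    · obtain ⟨hp2, _⟩ := hpar v hvR
      rw [hfdef]
      simp only [if_neg hvR]
      exact hp2
  have hFedge : F '' B ⊆ D.edgeSet := by
    rintro e ⟨R, hR, rfl⟩
    obtain ⟨_, hx2, _, _, _⟩ := hBspec R hR
    exact hx2
  -- counting
  have hcard1 : (f '' A).ncard = A.ncard := Set.ncard_image_of_injOn hfinj
  have hcard2 : (F '' B).ncard = B.ncard := Set.ncard_image_of_injOn hFinj
  have hunion : (f '' A ∪ F '' B).ncard = (f '' A).ncard + (F '' B).ncard :=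
    Set.ncard_union_eq hdisj (Set.toFinite _) (Set.toFinite _)
  have hle : (f '' A ∪ F '' B).ncard ≤ D.edgeSet.ncard :=
    Set.ncard_le_ncard (Set.union_subset hfedge hFedge) (Set.toFinite _)
  have hA : A.ncard = Nat.card V - 1 := by
    rw [hAdef, ← Set.ncard_univ V]
    exact Set.ncard_diff_singleton_of_mem (Set.mem_univ x₀)
  have hB : B.ncard = {R : Set V | IsRigidity G D R}.ncard - 1 := by
    rw [hBdef]
    exact Set.ncard_diff_singleton_of_mem (s := {R : Set V | IsRigidity G D R}) hrigR₀
  have hVpos : 1 ≤ Nat.card V := by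
    have : Nonempty V := hconn.nonempty
    exact Nat.card_pos
  have hRpos : 1 ≤ {R : Set V | IsRigidity G D R}.ncard := by
    rw [Nat.one_le_iff_ne_zero, ← Nat.pos_iff_ne_zero]
    exact (Set.ncard_pos (Set.toFinite _)).mpr ⟨R₀, hrigR₀⟩
  have hfinal : {R : Set V | IsRigidity G D R}.ncard + Nat.card V ≤ D.edgeSet.ncard + 2 := by
    omega
  have hz : ({R : Set V | IsRigidity G D R}.ncard : ℤ) + (Nat.card V : ℤ) ≤
      (D.edgeSet.ncard : ℤ) + 2 := by exact_mod_cast hfinal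
  linarith
end

section
/- Let D be a finite connected graph with a group G acting by graph automorphisms, and let v be a vertex of D. Then the number of rigidities of D whose vertex set is disjoint from the G-orbit of v is at most β(D) + |G·v| - 1. -/
open MulAction SimpleGraph

section Aux
attribute [local instance] Classical.propDecidable
variable {V G : Type*} [Group G] [MulAction G V]

variable (G) in
/-- `u` and `w` lie in a common "rigidity-like" component avoiding `O`. -/
def Zr (D : SimpleGraph V) (O : Set V) (u w : V) : Prop :=
  ∃ (H : Subgroup G) (hu : u ∈ fixedPoints H V) (hw : w ∈ fixedPoints H V),
    (D.induce (fixedPoints H V)).Reachable ⟨u, hu⟩ ⟨w, hw⟩ ∧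
    ∀ x (hx : x ∈ fixedPoints H V),
      (D.induce (fixedPoints H V)).Reachable ⟨x, hx⟩ ⟨u, hu⟩ →
        MulAction.stabilizer G x = H ∧ x ∉ O


variable (G) in
noncomputable def wcost (D : SimpleGraph V) (O : Set V) :
    {x y : V} → D.Walk x y → ℕ
  | _, _, .nil => 0
  | _, _, @SimpleGraph.Walk.cons _ _ u w _ _ p =>
      (if Zr G D O u w then 0 else 1) + wcost D O p

variable (G) in
noncomputable def mu (D : SimpleGraph V) (O : Set V) (x : V) : ℕ :=
  sInf {n | ∃ o, o ∈ O ∧ ∃ w : D.Walk x o, wcost G D O w = n}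

variable {D : SimpleGraph V} {O : Set V}

lemma wcost_cons {u w y : V} (h : D.Adj u w) (p : D.Walk w y) :
    wcost G D O (.cons h p) = (if Zr G D O u w then 0 else 1) + wcost G D O p := by
  rw [wcost]

lemma mu_le {x o : V} (ho : o ∈ O) (w : D.Walk x o) : mu G D O x ≤ wcost G D O w :=
  Nat.sInf_le ⟨o, ho, w, rfl⟩

lemma mu_exists (hconn : D.Connected) {o₀ : V} (ho₀ : o₀ ∈ O) (x : V) :
    ∃ o, o ∈ O ∧ ∃ w : D.Walk x o, wcost G D O w = mu G D O x := by
  have hne : {n | ∃ o, o ∈ O ∧ ∃ w : D.Walk x o, wcost G D O w = n}.Nonempty := by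
    obtain ⟨w⟩ := hconn x o₀
    exact ⟨wcost G D O w, o₀, ho₀, w, rfl⟩
  exact Nat.sInf_mem hne


lemma Zr.notMem_left {u w : V} (h : Zr G D O u w) : u ∉ O := by
  obtain ⟨H, hu, hw, hr, hall⟩ := h
  exact (hall u hu (Reachable.refl _)).2

lemma Zr.notMem_right {u w : V} (h : Zr G D O u w) : w ∉ O := by
  obtain ⟨H, hu, hw, hr, hall⟩ := h
  exact (hall w hw hr.symm).2

lemma mem_of_wcost_zero {x o : V} (w : D.Walk x o) (ho : o ∈ O)
    (h : wcost G D O w = 0) : x ∈ O := by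
  induction w with
  | nil => exact ho
  | @cons xx uu oo hadj p ih =>
    rw [wcost_cons] at h
    by_cases hz : Zr G D O xx uu
    · exact absurd (ih ho (by omega)) hz.notMem_right
    · simp [hz] at h

lemma mem_of_mu_eq_zero (hconn : D.Connected) {o₀ : V} (ho₀ : o₀ ∈ O) {x : V}
    (h : mu G D O x = 0) : x ∈ O := by
  obtain ⟨o, ho, w, hw⟩ := mu_exists (G := G) hconn ho₀ x
  exact mem_of_wcost_zero w ho (hw.trans h)

lemma mu_le_of_zr_adj (hconn : D.Connected) {o₀ : V} (ho₀ : o₀ ∈ O) {u w : V}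
    (hadj : D.Adj u w) (hz : Zr G D O u w) : mu G D O u ≤ mu G D O w := by
  obtain ⟨o, ho, p, hp⟩ := mu_exists (G := G) hconn ho₀ w
  calc mu G D O u ≤ wcost G D O (.cons hadj p) := mu_le ho _
  _ = mu G D O w := by rw [wcost_cons, if_pos hz, zero_add, hp]

lemma exists_down_free (hconn : D.Connected) {o₀ : V} (ho₀ : o₀ ∈ O) {x : V}
    (hxO : x ∉ O) (hfree : ∀ u, ¬ Zr G D O x u) :
    ∃ y, D.Adj x y ∧ mu G D O y < mu G D O x := by
  obtain ⟨o, ho, w, hw⟩ := mu_exists (G := G) hconn ho₀ x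
  cases w with
  | nil => exact absurd ho hxO
  | @cons _ u _ hadj p =>
    refine ⟨u, hadj, ?_⟩
    rw [wcost_cons, if_neg (hfree u)] at hw
    have := mu_le (G := G) ho p
    omega

/-- The set of rigidities disjoint from `O`. -/
def Srig (G : Type*) [Group G] [MulAction G V] (D : SimpleGraph V) (O : Set V) :
    Set (Set V) :=
  {R : Set V | (∃ H : Subgroup G,
    (∃ c : (D.induce (MulAction.fixedPoints H V)).ConnectedComponent,
        R = Subtype.val '' c.supp) ∧
    ∀ v ∈ R, MulAction.stabilizer G v = H) ∧ R ∩ O = ∅}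

lemma mem_of_mem_supp {H : Subgroup G} {c : (D.induce (fixedPoints H V)).ConnectedComponent}
    {R : Set V} (hRc : R = Subtype.val '' c.supp) {x : V} (hx : x ∈ R) :
    ∃ hfx : x ∈ fixedPoints H V,
      (D.induce (fixedPoints H V)).connectedComponentMk ⟨x, hfx⟩ = c := by
  rw [hRc] at hx
  obtain ⟨xt, hxt, rfl⟩ := hx
  exact ⟨xt.2, hxt⟩

lemma zr_of_mem {R : Set V} (hR : R ∈ Srig G D O) {u w : V}
    (hu : u ∈ R) (hw : w ∈ R) : Zr G D O u w := by
  obtain ⟨⟨H, ⟨c, hRc⟩, hstab⟩, hRO⟩ := hR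
  obtain ⟨hfu, hcu⟩ := mem_of_mem_supp hRc hu
  obtain ⟨hfw, hcw⟩ := mem_of_mem_supp hRc hw
  refine ⟨H, hfu, hfw, ConnectedComponent.exact (hcu.trans hcw.symm), ?_⟩
  intro x hfx hreach
  have hxc : (D.induce (fixedPoints H V)).connectedComponentMk ⟨x, hfx⟩ = c :=
    (ConnectedComponent.sound hreach).trans hcu
  have hxR : x ∈ R := by
    rw [hRc]; exact ⟨⟨x, hfx⟩, hxc, rfl⟩
  refine ⟨hstab x hxR, fun hxO => ?_⟩
  rw [Set.eq_empty_iff_forall_notMem] at hRO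
  exact hRO x ⟨hxR, hxO⟩

lemma zr_closed {R : Set V} (hR : R ∈ Srig G D O) {a u : V}
    (ha : a ∈ R) (hz : Zr G D O a u) : u ∈ R := by
  obtain ⟨⟨H, ⟨c, hRc⟩, hstab⟩, hRO⟩ := hR
  obtain ⟨H₀, hfa, hfu, hreach, hall⟩ := hz
  have hH : H₀ = H := by
    rw [← (hall a hfa (Reachable.refl _)).1, hstab a ha]
  subst hH
  obtain ⟨hfa', hca⟩ := mem_of_mem_supp hRc ha
  have : (⟨a, hfa⟩ : {x // x ∈ fixedPoints H₀ V}) = ⟨a, hfa'⟩ := rfl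
  rw [hRc]
  refine ⟨⟨u, hfu⟩, ?_, rfl⟩
  rw [ConnectedComponent.mem_supp_iff, ← hca]
  exact ConnectedComponent.sound hreach.symm

lemma zr_mem_rig {x u : V} (hz : Zr G D O x u) : ∃ R ∈ Srig G D O, x ∈ R := by
  obtain ⟨H, hfx, hfu, hreach, hall⟩ := hz
  set I := D.induce (fixedPoints H V)
  set c := I.connectedComponentMk ⟨x, hfx⟩ with hc
  refine ⟨Subtype.val '' c.supp, ⟨⟨H, ⟨c, rfl⟩, ?_⟩, ?_⟩, ⟨x, hfx⟩, by
    rw [ConnectedComponent.mem_supp_iff], rfl⟩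
  · rintro y ⟨yt, hyt, rfl⟩
    rw [ConnectedComponent.mem_supp_iff, hc] at hyt
    exact (hall _ yt.2 (by simpa using ConnectedComponent.exact hyt)).1
  · rw [Set.eq_empty_iff_forall_notMem]
    rintro y ⟨⟨yt, hyt, rfl⟩, hyO⟩
    rw [ConnectedComponent.mem_supp_iff, hc] at hyt
    exact (hall _ yt.2 (by simpa using ConnectedComponent.exact hyt)).2 hyO

lemma down_rig_aux {R : Set V} (hR : R ∈ Srig G D O) :
    ∀ {a o : V} (w : D.Walk a o), a ∈ R → o ∈ O →
      ∃ b ∈ R, ∃ y, D.Adj b y ∧ mu G D O y < wcost G D O w := by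
  intro a o w
  induction w with
  | nil =>
    intro ha ho
    exfalso
    have := hR.2
    rw [Set.eq_empty_iff_forall_notMem] at this
    exact this _ ⟨ha, ho⟩
  | @cons a u o hadj p ih =>
    intro ha ho
    rw [wcost_cons]
    by_cases hu : u ∈ R
    · obtain ⟨b, hb, y, hy, hmu⟩ := ih hu ho
      exact ⟨b, hb, y, hy, by omega⟩
    · have hz : ¬ Zr G D O a u := fun hz => hu (zr_closed hR ha hz)
      rw [if_neg hz]
      have := mu_le (G := G) ho p
      exact ⟨a, ha, u, hadj, by omega⟩

lemma mu_le_on {R : Set V} (hconn : D.Connected) {o₀ : V} (ho₀ : o₀ ∈ O)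
    (hR : R ∈ Srig G D O) {u w : V} (hu : u ∈ R) (hw : w ∈ R) :
    mu G D O u ≤ mu G D O w := by
  obtain ⟨⟨H, ⟨c, hRc⟩, hstab⟩, hRO⟩ := id hR
  obtain ⟨hfu, hcu⟩ := mem_of_mem_supp hRc hu
  obtain ⟨hfw, hcw⟩ := mem_of_mem_supp hRc hw
  obtain ⟨W⟩ := ConnectedComponent.exact (hcu.trans hcw.symm)
  clear hcu hcw
  set I := D.induce (fixedPoints H V)
  have key : ∀ (xt yt : {z // z ∈ fixedPoints H V}) (W : I.Walk xt yt),
      (xt : V) ∈ R → (yt : V) ∈ R → mu G D O (xt : V) ≤ mu G D O (yt : V) := by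
    intro xt yt W
    induction W with
    | nil => intro _ _; exact le_refl _
    | @cons xt zt yt hadj p ih =>
      intro hx hy
      have hzR : (zt : V) ∈ R := by
        obtain ⟨hfx, hcx⟩ := mem_of_mem_supp hRc hx
        rw [hRc]
        refine ⟨zt, ?_, rfl⟩
        rw [ConnectedComponent.mem_supp_iff, ← hcx]
        exact ConnectedComponent.sound (Reachable.symm ⟨.cons hadj .nil⟩)
      have hadj' : D.Adj (xt : V) (zt : V) := hadj
      exact le_trans
        (mu_le_of_zr_adj hconn ho₀ hadj' (zr_of_mem hR hx hzR)) (ih hzR hy)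
  exact key _ _ W hu hw

lemma exists_down_rig (hconn : D.Connected) {o₀ : V} (ho₀ : o₀ ∈ O)
    {R : Set V} (hR : R ∈ Srig G D O) {a : V} (ha : a ∈ R) :
    ∃ b ∈ R, ∃ y, D.Adj b y ∧ mu G D O y < mu G D O b := by
  obtain ⟨o, ho, w, hw⟩ := mu_exists (G := G) hconn ho₀ a
  obtain ⟨b, hb, y, hy, hmu⟩ := down_rig_aux hR w ha ho
  refine ⟨b, hb, y, hy, lt_of_lt_of_le (hw ▸ hmu) (mu_le_on hconn ho₀ hR ha hb)⟩

variable (G) in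
def smulHom (hact : ∀ (g : G) (v w : V), D.Adj (g • v) (g • w) ↔ D.Adj v w) (g : G) :
    D →g D :=
  ⟨fun x => g • x, fun h => (hact g _ _).mpr h⟩

lemma fixed_smul {H : Subgroup G} {x : V} (g : G) (hx : x ∈ fixedPoints H V) :
    g • x ∈ fixedPoints (H.map (MulAut.conj g).toMonoidHom) V := by
  rw [mem_fixedPoints]
  rintro ⟨h', hh'⟩
  rw [Subgroup.mem_map] at hh'
  obtain ⟨h, hh, rfl⟩ := hh'
  have hfix : h • x = x := mem_fixedPoints.mp hx ⟨h, hh⟩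
  show (MulAut.conj g h : G) • g • x = g • x
  simp only [MulAut.conj_apply]
  have hg : g * h * g⁻¹ * g = g * h := by group
  rw [smul_smul, hg, mul_smul, hfix]

lemma map_conj_conj_inv (H : Subgroup G) (g : G) :
    (H.map (MulAut.conj g).toMonoidHom).map (MulAut.conj g⁻¹).toMonoidHom = H := by
  rw [Subgroup.map_map]
  convert Subgroup.map_id H using 2
  ext x
  simp [MulAut.conj_apply]
  group

variable (G) in
def indSmulHom (hact : ∀ (g : G) (v w : V), D.Adj (g • v) (g • w) ↔ D.Adj v w)
    (g : G) (H : Subgroup G) :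
    D.induce (fixedPoints H V) →g
      D.induce (fixedPoints (H.map (MulAut.conj g).toMonoidHom) V) :=
  ⟨fun x => ⟨g • (x : V), fixed_smul g x.2⟩, by
    intro a b hab
    have : D.Adj (a : V) (b : V) := hab
    exact (hact g _ _).mpr this⟩

lemma reach_congr {H K : Subgroup G} (hHK : H = K) {a b : V}
    {ha : a ∈ fixedPoints H V} {hb : b ∈ fixedPoints H V}
    (ha' : a ∈ fixedPoints K V) (hb' : b ∈ fixedPoints K V)
    (hr : (D.induce (fixedPoints H V)).Reachable ⟨a, ha⟩ ⟨b, hb⟩) :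
    (D.induce (fixedPoints K V)).Reachable ⟨a, ha'⟩ ⟨b, hb'⟩ := by
  subst hHK; exact hr

lemma zr_smul (hact : ∀ (g : G) (v w : V), D.Adj (g • v) (g • w) ↔ D.Adj v w)
    (hOinv : ∀ (g : G) (x : V), x ∈ O → g • x ∈ O) (g : G) {u w : V}
    (hz : Zr G D O u w) : Zr G D O (g • u) (g • w) := by
  obtain ⟨H, hu, hw, hreach, hall⟩ := hz
  refine ⟨H.map (MulAut.conj g).toMonoidHom, fixed_smul g hu, fixed_smul g hw,
    hreach.map (indSmulHom G hact g H), ?_⟩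
  intro x hfx hreach'
  -- pull back with g⁻¹
  have hback := hreach'.map (indSmulHom G hact g⁻¹ (H.map (MulAut.conj g).toMonoidHom))
  have hfx' : g⁻¹ • x ∈ fixedPoints H V := by
    have := fixed_smul (H := H.map (MulAut.conj g).toMonoidHom) g⁻¹ hfx
    rwa [map_conj_conj_inv] at this
  have hfu' : g⁻¹ • (g • u) ∈ fixedPoints H V := by
    rw [inv_smul_smul]; exact hu
  have hback2 : (D.induce (fixedPoints H V)).Reachable ⟨g⁻¹ • x, hfx'⟩
      ⟨g⁻¹ • (g • u), hfu'⟩ :=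
    reach_congr (map_conj_conj_inv H g) hfx' hfu' hback
  have heq : (⟨g⁻¹ • (g • u), hfu'⟩ : {z // z ∈ fixedPoints H V}) = ⟨u, hu⟩ :=
    Subtype.ext (inv_smul_smul g u)
  rw [heq] at hback2
  have hreach2 := hback2
  obtain ⟨hstab, hO⟩ := hall (g⁻¹ • x) hfx' hreach2
  constructor
  · have : stabilizer G (g • (g⁻¹ • x)) =
        (stabilizer G (g⁻¹ • x)).map (MulAut.conj g).toMonoidHom :=
      stabilizer_smul_eq_stabilizer_map_conj g _
    rw [smul_inv_smul] at this
    rw [this, hstab]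
  · intro hxO
    exact hO (by simpa using hOinv g⁻¹ x hxO)

lemma wcost_map_le (hact : ∀ (g : G) (v w : V), D.Adj (g • v) (g • w) ↔ D.Adj v w)
    (hOinv : ∀ (g : G) (x : V), x ∈ O → g • x ∈ O) (g : G) {x y : V}
    (w : D.Walk x y) :
    wcost G D O (w.map (smulHom G hact g)) ≤ wcost G D O w := by
  induction w with
  | nil => simp [wcost]
  | @cons a u o hadj p ih =>
    rw [Walk.map_cons, wcost_cons, wcost_cons]
    have h2 : (if Zr G D O (smulHom G hact g a) (smulHom G hact g u) then 0 else 1) ≤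
        (if Zr G D O a u then 0 else 1) := by
      by_cases hz : Zr G D O a u
      · rw [if_pos hz, if_pos (show Zr G D O ((smulHom G hact g) a) ((smulHom G hact g) u)
              from zr_smul hact hOinv g hz)]
      · rw [if_neg hz]
        split <;> omega
    omega

lemma mu_smul_le (hact : ∀ (g : G) (v w : V), D.Adj (g • v) (g • w) ↔ D.Adj v w)
    (hOinv : ∀ (g : G) (x : V), x ∈ O → g • x ∈ O)
    (hconn : D.Connected) {o₀ : V} (ho₀ : o₀ ∈ O) (g : G) (x : V) :
    mu G D O (g • x) ≤ mu G D O x := by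
  obtain ⟨o, ho, w, hw⟩ := mu_exists (G := G) hconn ho₀ x
  calc mu G D O (g • x) ≤ wcost G D O (w.map (smulHom G hact g)) :=
        mu_le (hOinv g o ho) _
  _ ≤ wcost G D O w := wcost_map_le hact hOinv g w
  _ = mu G D O x := hw

lemma mu_smul (hact : ∀ (g : G) (v w : V), D.Adj (g • v) (g • w) ↔ D.Adj v w)
    (hOinv : ∀ (g : G) (x : V), x ∈ O → g • x ∈ O)
    (hconn : D.Connected) {o₀ : V} (ho₀ : o₀ ∈ O) (g : G) (x : V) :
    mu G D O (g • x) = mu G D O x := by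
  refine le_antisymm (mu_smul_le hact hOinv hconn ho₀ g x) ?_
  have := mu_smul_le hact hOinv hconn ho₀ g⁻¹ (g • x)
  rwa [inv_smul_smul] at this

lemma second_edge (hact : ∀ (g : G) (v w : V), D.Adj (g • v) (g • w) ↔ D.Adj v w)
    {R : Set V} (hR : R ∈ Srig G D O) {b y : V} (hb : b ∈ R) (hy : y ∉ R)
    (hadj : D.Adj b y) :
    ∃ g : G, g • y ≠ y ∧ g • y ∉ R ∧ D.Adj b (g • y) := by
  obtain ⟨⟨H, ⟨c, hRc⟩, hstab⟩, hRO⟩ := id hR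
  obtain ⟨hfb, hcb⟩ := mem_of_mem_supp hRc hb
  -- y is not a fixed point of H
  have hyf : y ∉ fixedPoints H V := by
    intro hfy
    apply hy
    rw [hRc]
    refine ⟨⟨y, hfy⟩, ?_, rfl⟩
    rw [ConnectedComponent.mem_supp_iff, ← hcb]
    exact ConnectedComponent.sound (Reachable.symm ⟨.cons (by exact hadj) .nil⟩)
  rw [mem_fixedPoints] at hyf
  push_neg at hyf
  obtain ⟨⟨g, hgH⟩, hgy⟩ := hyf
  have hgy' : g • y ≠ y := hgy
  have hgb : g • b = b := mem_fixedPoints.mp hfb ⟨g, hgH⟩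
  refine ⟨g, hgy', ?_, ?_⟩
  · intro hmem
    obtain ⟨hfgy, _⟩ := mem_of_mem_supp hRc hmem
    have : (⟨g⁻¹, inv_mem hgH⟩ : H) • (g • y) = g • y := mem_fixedPoints.mp hfgy _
    have h2 : g⁻¹ • g • y = g • y := this
    rw [inv_smul_smul] at h2
    exact hgy' h2.symm
  · have := (hact g b y).mpr hadj
    rwa [hgb] at this

lemma exists_adj_dist_lt {W : Type*} {I : SimpleGraph W} {x r : W}
    (h : I.Reachable x r) (hne : x ≠ r) :
    ∃ y, I.Adj x y ∧ I.Reachable y r ∧ I.dist y r < I.dist x r := by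
  obtain ⟨p, hp⟩ := h.exists_walk_length_eq_dist
  have hd0 : I.dist x r ≠ 0 := fun h0 => hne (h.dist_eq_zero_iff.mp h0)
  cases p with
  | nil => exact absurd rfl hne
  | @cons _ y _ hadj q =>
    refine ⟨y, hadj, q.reachable, ?_⟩
    have := SimpleGraph.dist_le q
    simp only [Walk.length_cons] at hp
    omega

lemma rig_tree {R : Set V} (hR : R ∈ Srig G D O) :
    ∃ (r : V) (par : V → V) (rk : V → ℕ), r ∈ R ∧
      ∀ x, x ∈ R → x ≠ r → par x ∈ R ∧ D.Adj x (par x) ∧ rk (par x) < rk x := by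
  classical
  obtain ⟨⟨H, ⟨c, hRc⟩, hstab⟩, hRO⟩ := id hR
  obtain ⟨rt0, hrt0⟩ := c.exists_rep
  have hrt0' : (D.induce (fixedPoints H V)).connectedComponentMk rt0 = c := hrt0
  have hrR : (rt0 : V) ∈ R := by
    rw [hRc]; exact ⟨rt0, by rwa [ConnectedComponent.mem_supp_iff], rfl⟩
  have key : ∀ x, ∃ y, x ∈ R → x ≠ (rt0 : V) → y ∈ R ∧ D.Adj x y ∧
      (if hy : y ∈ fixedPoints H V then (D.induce (fixedPoints H V)).dist ⟨y, hy⟩ rt0 else 0) <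
      (if hx : x ∈ fixedPoints H V then (D.induce (fixedPoints H V)).dist ⟨x, hx⟩ rt0 else 0) := by
    intro x
    by_cases hx : x ∈ R ∧ x ≠ (rt0 : V)
    · obtain ⟨hxR, hxne⟩ := hx
      obtain ⟨hfx, hcx⟩ := mem_of_mem_supp hRc hxR
      have hreach : (D.induce (fixedPoints H V)).Reachable ⟨x, hfx⟩ rt0 :=
        ConnectedComponent.exact (hcx.trans hrt0'.symm)
      have hne' : (⟨x, hfx⟩ : {z // z ∈ fixedPoints H V}) ≠ rt0 := by
        intro heq; exact hxne (congrArg Subtype.val heq)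
      obtain ⟨yt, hadj, hyreach, hdlt⟩ := exists_adj_dist_lt hreach hne'
      refine ⟨(yt : V), fun _ _ => ⟨?_, hadj, ?_⟩⟩
      · rw [hRc]
        refine ⟨yt, ?_, rfl⟩
        rw [ConnectedComponent.mem_supp_iff, ← hrt0']
        exact ConnectedComponent.sound hyreach
      · rw [dif_pos yt.2, dif_pos hfx]
        exact hdlt
    · exact ⟨x, fun h1 h2 => absurd ⟨h1, h2⟩ hx⟩
  choose par hpar using key
  refine ⟨rt0, par, fun z =>
    (if hz : z ∈ fixedPoints H V then (D.induce (fixedPoints H V)).dist ⟨z, hz⟩ rt0 else 0),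
    hrR, fun x h1 h2 => hpar x h1 h2⟩

lemma srig_disjoint {R R' : Set V} (hR : R ∈ Srig G D O) (hR' : R' ∈ Srig G D O)
    {x : V} (hx : x ∈ R) (hx' : x ∈ R') : R = R' := by
  obtain ⟨⟨H, ⟨c, hRc⟩, hstab⟩, _⟩ := hR
  obtain ⟨⟨H', ⟨c', hRc'⟩, hstab'⟩, _⟩ := hR'
  have hH : H = H' := by rw [← hstab x hx, ← hstab' x hx']
  subst hH
  obtain ⟨hfx, hcx⟩ := mem_of_mem_supp hRc hx
  obtain ⟨hfx', hcx'⟩ := mem_of_mem_supp hRc' hx'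
  have : c = c' := by
    rw [← hcx, ← hcx']
  rw [hRc, hRc', this]

lemma rig_package (hact : ∀ (g : G) (v w : V), D.Adj (g • v) (g • w) ↔ D.Adj v w)
    (hOinv : ∀ (g : G) (x : V), x ∈ O → g • x ∈ O)
    (hconn : D.Connected) {o₀ : V} (ho₀ : o₀ ∈ O)
    {R : Set V} (hR : R ∈ Srig G D O) :
    ∃ (r b y₁ y₂ : V) (par : V → V) (rk : V → ℕ),
      r ∈ R ∧
      (∀ x, x ∈ R → x ≠ r → par x ∈ R ∧ D.Adj x (par x) ∧ rk (par x) < rk x) ∧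
      b ∈ R ∧ y₁ ∉ R ∧ y₂ ∉ R ∧ y₁ ≠ y₂ ∧ D.Adj b y₁ ∧ D.Adj b y₂ ∧
      mu G D O y₁ < mu G D O b ∧ mu G D O y₂ < mu G D O b ∧
      (∀ x, x ∈ R → mu G D O x = mu G D O b) := by
  obtain ⟨r, par, rk, hrR, hpar⟩ := rig_tree hR
  obtain ⟨b, hb, y₁, hadj₁, hmu₁⟩ := exists_down_rig hconn ho₀ hR hrR
  have hy₁ : y₁ ∉ R := fun hmem =>
    absurd hmu₁ (not_lt.mpr (mu_le_on hconn ho₀ hR hb hmem))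
  obtain ⟨g, hgne, hgnotR, hadj₂⟩ := second_edge hact hR hb hy₁ hadj₁
  have hmu₂ : mu G D O (g • y₁) < mu G D O b := by
    rw [mu_smul hact hOinv hconn ho₀]; exact hmu₁
  exact ⟨r, b, y₁, g • y₁, par, rk, hrR, hpar, hb, hy₁, hgnotR, fun h => hgne h.symm,
    hadj₁, hadj₂, hmu₁, hmu₂,
    fun x hx => le_antisymm (mu_le_on hconn ho₀ hR hx hb) (mu_le_on hconn ho₀ hR hb hx)⟩

noncomputable def FE {V : Type*} (𝒮 : Set (Set V)) (O : Set V)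
    (Rof : V → Set V) (B Y1 Y2 rt : Set V → V) (par : Set V → V → V) (wf : V → V) :
    ↥(Oᶜ) ⊕ ↥𝒮 → Sym2 V
  | .inl u =>
      if Rof (u : V) ∈ 𝒮 ∧ (u : V) ∈ Rof (u : V) then
        (if (u : V) = rt (Rof (u : V)) then s(B (Rof (u : V)), Y1 (Rof (u : V)))
         else s((u : V), par (Rof (u : V)) (u : V)))
      else s((u : V), wf (u : V))
  | .inr t => s(B (t : Set V), Y2 (t : Set V))

lemma count_le {V : Type*} [Finite V] {D : SimpleGraph V} {𝒮 : Set (Set V)} {O : Set V}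
    (m : V → ℕ) (rk : Set V → V → ℕ) (Rof : V → Set V) (B Y1 Y2 rt : Set V → V)
    (par : Set V → V → V) (wf : V → V)
    (hdisj : ∀ R ∈ 𝒮, ∀ R' ∈ 𝒮, ∀ x : V, x ∈ R → x ∈ R' → R = R')
    (hB : ∀ R ∈ 𝒮, B R ∈ R) (hY1 : ∀ R ∈ 𝒮, Y1 R ∉ R) (hY2 : ∀ R ∈ 𝒮, Y2 R ∉ R)
    (hY12 : ∀ R ∈ 𝒮, Y1 R ≠ Y2 R)
    (hA1 : ∀ R ∈ 𝒮, D.Adj (B R) (Y1 R)) (hA2 : ∀ R ∈ 𝒮, D.Adj (B R) (Y2 R))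
    (hm1 : ∀ R ∈ 𝒮, m (Y1 R) < m (B R)) (hm2 : ∀ R ∈ 𝒮, m (Y2 R) < m (B R))
    (hpar : ∀ R ∈ 𝒮, ∀ x : V, x ∈ R → x ≠ rt R →
      par R x ∈ R ∧ D.Adj x (par R x) ∧ rk R (par R x) < rk R x)
    (hRof : ∀ x : V, ∀ R ∈ 𝒮, x ∈ R → Rof x ∈ 𝒮 ∧ x ∈ Rof x)
    (hwf : ∀ x : V, x ∉ O → ¬(Rof x ∈ 𝒮 ∧ x ∈ Rof x) →
      D.Adj x (wf x) ∧ m (wf x) < m x) :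
    Oᶜ.ncard + 𝒮.ncard ≤ D.edgeSet.ncard := by
  classical
  haveI : Finite (Sym2 V) := by
    have hsurj : Function.Surjective (fun p : V × V => s(p.1, p.2)) := by
      intro e
      obtain ⟨⟨a, b⟩, rfl⟩ := Quot.exists_rep e
      exact ⟨(a, b), rfl⟩
    exact Finite.of_surjective _ hsurj
  -- boundary vs boundary
  have KB : ∀ R ∈ 𝒮, ∀ R' ∈ 𝒮, ∀ y y' : V, y ∉ R → y' ∉ R' →
      m y < m (B R) → m y' < m (B R') → s(B R, y) = s(B R', y') → R = R' ∧ y = y' := by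
    intro R hR R' hR' y y' hy hy' hmy hmy' heq
    rw [Sym2.eq_iff] at heq
    rcases heq with ⟨hb, hyy⟩ | ⟨hb, hyy⟩
    · exact ⟨hdisj R hR R' hR' (B R) (hB R hR) (hb ▸ hB R' hR'), hyy⟩
    · exfalso
      rw [← hb, ← hyy] at hmy'
      omega
  -- boundary vs internal
  have X12 : ∀ R ∈ 𝒮, ∀ R' ∈ 𝒮, ∀ x' : V, x' ∈ R' → x' ≠ rt R' → ∀ y : V, y ∉ R →
      s(B R, y) ≠ s(x', par R' x') := by
    intro R hR R' hR' x' hx' hxr y hy heq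
    rw [Sym2.eq_iff] at heq
    rcases heq with ⟨hb, hyy⟩ | ⟨hb, hyy⟩
    · have hRR : R = R' := hdisj R hR R' hR' (B R) (hB R hR) (hb ▸ hx')
      apply hy
      rw [hRR, hyy]
      exact (hpar _ hR' _ hx' hxr).1
    · have hRR : R = R' := hdisj R hR R' hR' (B R) (hB R hR)
        (hb ▸ (hpar _ hR' _ hx' hxr).1)
      apply hy
      rw [hRR, hyy]
      exact hx'
  -- boundary vs free
  have X13 : ∀ R ∈ 𝒮, ∀ y : V, y ∉ R → m y < m (B R) → ∀ x' : V, x' ∉ O →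
      ¬(Rof x' ∈ 𝒮 ∧ x' ∈ Rof x') → s(B R, y) ≠ s(x', wf x') := by
    intro R hR y hy hmy x' hxO hC heq
    rw [Sym2.eq_iff] at heq
    rcases heq with ⟨hb, hyy⟩ | ⟨hb, hyy⟩
    · exact hC (hRof x' R hR (hb ▸ hB R hR))
    · have h5 := (hwf x' hxO hC).2
      rw [← hb] at h5
      rw [← hyy] at h5
      omega
  -- internal vs free
  have X23 : ∀ R ∈ 𝒮, ∀ x : V, x ∈ R → x ≠ rt R → ∀ x' : V,
      ¬(Rof x' ∈ 𝒮 ∧ x' ∈ Rof x') → s(x, par R x) ≠ s(x', wf x') := by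
    intro R hR x hx hxr x' hC heq
    rw [Sym2.eq_iff] at heq
    rcases heq with ⟨hb, hyy⟩ | ⟨hb, hyy⟩
    · exact hC (hRof x' R hR (hb ▸ hx))
    · exact hC (hRof x' R hR (hyy ▸ (hpar _ hR _ hx hxr).1))
  -- internal vs internal
  have X22 : ∀ R ∈ 𝒮, ∀ R' ∈ 𝒮, ∀ x x' : V, x ∈ R → x ≠ rt R → x' ∈ R' → x' ≠ rt R' →
      s(x, par R x) = s(x', par R' x') → x = x' := by
    intro R hR R' hR' x x' hx hxr hx' hxr' heq
    rw [Sym2.eq_iff] at heq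
    rcases heq with ⟨hb, hyy⟩ | ⟨hb, hyy⟩
    · exact hb
    · exfalso
      have hRR : R = R' := hdisj R hR R' hR' x hx (hb ▸ (hpar _ hR' _ hx' hxr').1)
      have h6 := (hpar _ hR _ hx hxr).2.2
      have h7 := (hpar _ hR' _ hx' hxr').2.2
      rw [← hRR] at h7 hb
      rw [hyy] at h6
      rw [← hb] at h7
      omega
  -- free vs free
  have X33 : ∀ x x' : V, x ∉ O → ¬(Rof x ∈ 𝒮 ∧ x ∈ Rof x) → x' ∉ O →
      ¬(Rof x' ∈ 𝒮 ∧ x' ∈ Rof x') → s(x, wf x) = s(x', wf x') → x = x' := by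
    intro x x' hxO hCx hxO' hCx' heq
    rw [Sym2.eq_iff] at heq
    rcases heq with ⟨hb, hyy⟩ | ⟨hb, hyy⟩
    · exact hb
    · exfalso
      have h5 := (hwf x hxO hCx).2
      have h6 := (hwf x' hxO' hCx').2
      rw [hyy] at h5
      rw [← hb] at h6
      omega
  set F := FE 𝒮 O Rof B Y1 Y2 rt par wf with hF
  have hFinl : ∀ u : ↥(Oᶜ), F (Sum.inl u) =
      (if Rof (u : V) ∈ 𝒮 ∧ (u : V) ∈ Rof (u : V) then
        (if (u : V) = rt (Rof (u : V)) then s(B (Rof (u : V)), Y1 (Rof (u : V)))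
         else s((u : V), par (Rof (u : V)) (u : V)))
      else s((u : V), wf (u : V))) := fun u => rfl
  have hFinr : ∀ t : ↥𝒮, F (Sum.inr t) = s(B (t : Set V), Y2 (t : Set V)) := fun t => rfl
  have hmemF : ∀ z, F z ∈ D.edgeSet := by
    rintro (u | t)
    · rw [hFinl]
      split_ifs with h1 h2
      · exact D.mem_edgeSet.mpr (hA1 _ h1.1)
      · exact D.mem_edgeSet.mpr (hpar _ h1.1 _ h1.2 h2).2.1
      · exact D.mem_edgeSet.mpr (hwf (u : V) u.2 h1).1
    · exact D.mem_edgeSet.mpr (hA2 _ t.2)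
  have hinj : Function.Injective F := by
    rintro (u | t) (u' | t') heq
    · -- inl / inl
      rw [hFinl, hFinl] at heq
      have hgoal : (u : V) = (u' : V) → Sum.inl u = (Sum.inl u' : ↥(Oᶜ) ⊕ ↥𝒮) :=
        fun h => congrArg Sum.inl (Subtype.ext h)
      by_cases hc1 : Rof (u : V) ∈ 𝒮 ∧ (u : V) ∈ Rof (u : V) <;>
        by_cases hc2 : Rof (u' : V) ∈ 𝒮 ∧ (u' : V) ∈ Rof (u' : V)
      · rw [if_pos hc1, if_pos hc2] at heq
        by_cases hr1 : (u : V) = rt (Rof (u : V)) <;>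
          by_cases hr2 : (u' : V) = rt (Rof (u' : V))
        · rw [if_pos hr1, if_pos hr2] at heq
          obtain ⟨hRR, _⟩ := KB _ hc1.1 _ hc2.1 _ _ (hY1 _ hc1.1) (hY1 _ hc2.1)
            (hm1 _ hc1.1) (hm1 _ hc2.1) heq
          apply hgoal
          rw [hr1, hr2, hRR]
        · rw [if_pos hr1, if_neg hr2] at heq
          exact absurd heq (X12 _ hc1.1 _ hc2.1 _ hc2.2 hr2 _ (hY1 _ hc1.1))
        · rw [if_neg hr1, if_pos hr2] at heq
          exact absurd heq.symm (X12 _ hc2.1 _ hc1.1 _ hc1.2 hr1 _ (hY1 _ hc2.1))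
        · rw [if_neg hr1, if_neg hr2] at heq
          exact hgoal (X22 _ hc1.1 _ hc2.1 _ _ hc1.2 hr1 hc2.2 hr2 heq)
      · rw [if_pos hc1, if_neg hc2] at heq
        by_cases hr1 : (u : V) = rt (Rof (u : V))
        · rw [if_pos hr1] at heq
          exact absurd heq (X13 _ hc1.1 _ (hY1 _ hc1.1) (hm1 _ hc1.1) _ u'.2 hc2)
        · rw [if_neg hr1] at heq
          exact absurd heq (X23 _ hc1.1 _ hc1.2 hr1 _ hc2)
      · rw [if_neg hc1, if_pos hc2] at heq
        by_cases hr2 : (u' : V) = rt (Rof (u' : V))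
        · rw [if_pos hr2] at heq
          exact absurd heq.symm (X13 _ hc2.1 _ (hY1 _ hc2.1) (hm1 _ hc2.1) _ u.2 hc1)
        · rw [if_neg hr2] at heq
          exact absurd heq.symm (X23 _ hc2.1 _ hc2.2 hr2 _ hc1)
      · rw [if_neg hc1, if_neg hc2] at heq
        exact hgoal (X33 _ _ u.2 hc1 u'.2 hc2 heq)
    · -- inl / inr
      exfalso
      rw [hFinl, hFinr] at heq
      by_cases hc1 : Rof (u : V) ∈ 𝒮 ∧ (u : V) ∈ Rof (u : V)
      · rw [if_pos hc1] at heq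
        by_cases hr1 : (u : V) = rt (Rof (u : V))
        · rw [if_pos hr1] at heq
          obtain ⟨hRR, hYY⟩ := KB _ hc1.1 _ t'.2 _ _ (hY1 _ hc1.1) (hY2 _ t'.2)
            (hm1 _ hc1.1) (hm2 _ t'.2) heq
          rw [hRR] at hYY
          exact hY12 _ t'.2 hYY
        · rw [if_neg hr1] at heq
          exact X12 _ t'.2 _ hc1.1 _ hc1.2 hr1 _ (hY2 _ t'.2) heq.symm
      · rw [if_neg hc1] at heq
        exact X13 _ t'.2 _ (hY2 _ t'.2) (hm2 _ t'.2) _ u.2 hc1 heq.symm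
    · -- inr / inl
      exfalso
      rw [hFinl, hFinr] at heq
      by_cases hc1 : Rof (u' : V) ∈ 𝒮 ∧ (u' : V) ∈ Rof (u' : V)
      · rw [if_pos hc1] at heq
        by_cases hr1 : (u' : V) = rt (Rof (u' : V))
        · rw [if_pos hr1] at heq
          obtain ⟨hRR, hYY⟩ := KB _ t.2 _ hc1.1 _ _ (hY2 _ t.2) (hY1 _ hc1.1)
            (hm2 _ t.2) (hm1 _ hc1.1) heq
          rw [hRR] at hYY
          exact hY12 _ hc1.1 hYY.symm
        · rw [if_neg hr1] at heq
          exact X12 _ t.2 _ hc1.1 _ hc1.2 hr1 _ (hY2 _ t.2) heq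
      · rw [if_neg hc1] at heq
        exact X13 _ t.2 _ (hY2 _ t.2) (hm2 _ t.2) _ u'.2 hc1 heq
    · -- inr / inr
      rw [hFinr, hFinr] at heq
      obtain ⟨hRR, _⟩ := KB _ t.2 _ t'.2 _ _ (hY2 _ t.2) (hY2 _ t'.2)
        (hm2 _ t.2) (hm2 _ t'.2) heq
      exact congrArg Sum.inr (Subtype.ext hRR)
  calc Oᶜ.ncard + 𝒮.ncard = Nat.card ↥(Oᶜ) + Nat.card ↥𝒮 := by
        rw [Nat.card_coe_set_eq, Nat.card_coe_set_eq]
  _ = Nat.card (↥(Oᶜ) ⊕ ↥𝒮) := (Nat.card_sum).symm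
  _ ≤ Nat.card ↥D.edgeSet := Nat.card_le_card_of_injective
        (fun z => (⟨F z, hmemF z⟩ : ↥D.edgeSet))
        (fun z z' h => hinj (Subtype.ext_iff.mp h))
  _ = D.edgeSet.ncard := Nat.card_coe_set_eq _

end Aux

/-- for any vertex `v` of the finite connected `G`-graph `D`, the number
of rigidities of `D` whose vertex set is disjoint from the orbit `G·v` is at most
`β(D) + |G·v| - 1`, where `β(D) = 1 - |V| + |E|`. -/
theorem stmt2 {V G : Type*} [Finite V] [Group G] [MulAction G V]
    (D : SimpleGraph V)
    (hact : ∀ (g : G) (v w : V), D.Adj (g • v) (g • w) ↔ D.Adj v w)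
    (hconn : D.Connected) (v : V) :
    ({R : Set V | IsRigidity G D R ∧ R ∩ MulAction.orbit G v = ∅}.ncard : ℤ) ≤
      (1 - (Nat.card V : ℤ) + (D.edgeSet.ncard : ℤ)) + (MulAction.orbit G v).ncard - 1 := by

  classical
  set O := MulAction.orbit G v with hOdef
  have ho₀ : v ∈ O := MulAction.mem_orbit_self v
  have hOinv : ∀ (g : G) (x : V), x ∈ O → g • x ∈ O := by
    intro g x hx
    obtain ⟨a, ha⟩ := hx
    have ha' : a • v = x := ha
    refine ⟨g * a, ?_⟩
    show (g * a) • v = g • x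
    rw [mul_smul, ha']
  have hSet : {R : Set V | IsRigidity G D R ∧ R ∩ O = ∅} = Srig G D O := rfl
  rw [hSet]
  -- per-rigidity data
  have hpack0 : ∀ (R : Set V) (hR : R ∈ Srig G D O),
      ∃ (r b y₁ y₂ : V) (par : V → V) (rk : V → ℕ),
      r ∈ R ∧
      (∀ x, x ∈ R → x ≠ r → par x ∈ R ∧ D.Adj x (par x) ∧ rk (par x) < rk x) ∧
      b ∈ R ∧ y₁ ∉ R ∧ y₂ ∉ R ∧ y₁ ≠ y₂ ∧ D.Adj b y₁ ∧ D.Adj b y₂ ∧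
      mu G D O y₁ < mu G D O b ∧ mu G D O y₂ < mu G D O b ∧
      (∀ x, x ∈ R → mu G D O x = mu G D O b) :=
    fun R hR => rig_package hact hOinv hconn ho₀ hR
  choose rF bF y1F y2F parF rkF hc1 hc2 hc3 hc4 hc5 hc6 hc7 hc8 hc9 hc10 hc11
    using hpack0
  -- free vertices
  have hfree0 : ∀ x : V, ∃ y : V, x ∉ O → ¬(∃ R ∈ Srig G D O, x ∈ R) →
      D.Adj x y ∧ mu G D O y < mu G D O x := by
    intro x
    by_cases hc : x ∉ O ∧ ¬(∃ R ∈ Srig G D O, x ∈ R)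
    · obtain ⟨y, hy1, hy2⟩ := exists_down_free hconn ho₀ hc.1
        (fun u hz => hc.2 (zr_mem_rig hz))
      exact ⟨y, fun _ _ => ⟨hy1, hy2⟩⟩
    · exact ⟨v, fun ha hb => absurd ⟨ha, hb⟩ hc⟩
  choose wfF hwfF using hfree0
  -- canonical rigidity containing a vertex
  have hRof0 : ∀ x : V, ∃ R : Set V, (∃ R' ∈ Srig G D O, x ∈ R') →
      (R ∈ Srig G D O ∧ x ∈ R) := by
    intro x
    by_cases hc : ∃ R' ∈ Srig G D O, x ∈ R'
    · obtain ⟨R', hR', hx⟩ := hc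
      exact ⟨R', fun _ => ⟨hR', hx⟩⟩
    · exact ⟨∅, fun h => absurd h hc⟩
  choose Rof hRofF using hRof0
  have key : Oᶜ.ncard + (Srig G D O).ncard ≤ D.edgeSet.ncard := by
    refine count_le (D := D) (mu G D O)
      (fun R => if hR : R ∈ Srig G D O then rkF R hR else fun _ => 0)
      Rof
      (fun R => if hR : R ∈ Srig G D O then bF R hR else v)
      (fun R => if hR : R ∈ Srig G D O then y1F R hR else v)
      (fun R => if hR : R ∈ Srig G D O then y2F R hR else v)
      (fun R => if hR : R ∈ Srig G D O then rF R hR else v)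
      (fun R => if hR : R ∈ Srig G D O then parF R hR else id)
      wfF
      (fun R hR R' hR' x hx hx' => srig_disjoint hR hR' hx hx')
      (fun R hR => by simp only [dif_pos hR]; exact hc3 R hR)
      (fun R hR => by simp only [dif_pos hR]; exact hc4 R hR)
      (fun R hR => by simp only [dif_pos hR]; exact hc5 R hR)
      (fun R hR => by simp only [dif_pos hR]; exact hc6 R hR)
      (fun R hR => by simp only [dif_pos hR]; exact hc7 R hR)
      (fun R hR => by simp only [dif_pos hR]; exact hc8 R hR)
      (fun R hR => by simp only [dif_pos hR]; exact hc9 R hR)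
      (fun R hR => by simp only [dif_pos hR]; exact hc10 R hR)
      (fun R hR x hx hxr => by
        simp only [dif_pos hR] at hxr ⊢
        exact hc2 R hR x hx hxr)
      (fun x R hR hx => hRofF x ⟨R, hR, hx⟩)
      (fun x hxO hC => hwfF x hxO (fun hex => hC (hRofF x hex)))
  have hcompl : O.ncard + Oᶜ.ncard = Nat.card V := Set.ncard_add_ncard_compl O
  omega
end

section
/- Let D and D' be finite bipartite graphs with vertex colorings into cyan and purple vertices such that every purple vertex has degree 2 in both graphs, with D connected and D' connected. Let φ: D' → D be an epimorphism of bipartite graphs (a surjective color-preserving vertex map such that every edge of D lifts to an edge of D'). For a cyan vertex Γ of D write e_Γ = |φ⁻¹(Γ)|, and for a purple vertex x write i_x = |φ⁻¹(x)|. If for every purple vertex x of D and every cyan vertex Γ adjacent to x one has i_x ≥ e_Γ, then β(D) ≤ β(D'). -/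
open Finset

lemma stmt5_aux_edges {V : Type*} [Fintype V] [DecidableEq V]
    (G : SimpleGraph V) [DecidableRel G.Adj] (c : V → Bool)
    (hbip : ∀ v w, G.Adj v w → c v ≠ c w)
    (hdeg : ∀ v, c v = false → (G.neighborSet v).ncard = 2) :
    G.edgeFinset.card = 2 * (univ.filter (fun v => c v = false)).card := by
  have hdeg2 : ∀ v, c v = false → G.degree v = 2 := by
    intro v hv
    have := hdeg v hv
    rwa [Set.ncard_eq_toFinset_card'] at this
  have hcover : G.edgeFinset =
      (univ.filter (fun v => c v = false)).biUnion (fun v => G.incidenceFinset v) := by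
    ext e
    induction e with
    | _ a b =>
      simp only [Finset.mem_biUnion, Finset.mem_filter, Finset.mem_univ, true_and,
        SimpleGraph.mem_incidenceFinset, SimpleGraph.mem_edgeFinset]
      constructor
      · intro he
        have hadj : G.Adj a b := by rwa [SimpleGraph.mem_edgeSet] at he
        have hne := hbip a b hadj
        cases ha : c a
        · exact ⟨a, ha, he, Sym2.mem_mk_left a b⟩
        · cases hb : c b
          · exact ⟨b, hb, he, Sym2.mem_mk_right a b⟩
          · exact absurd (ha.trans hb.symm) hne
      · rintro ⟨v, hv, hmem, -⟩
        exact hmem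
  rw [hcover, Finset.card_biUnion]
  · rw [Finset.sum_congr rfl (fun v hv => by
      rw [SimpleGraph.card_incidenceFinset_eq_degree,
        hdeg2 v (Finset.mem_filter.mp hv).2]), Finset.sum_const, smul_eq_mul, mul_comm]
  · intro x hx y hy hxy
    simp only [Function.onFun, Finset.disjoint_left]
    intro e hex hey
    rw [SimpleGraph.mem_incidenceFinset] at hex hey
    have he : e = s(x, y) := (Sym2.mem_and_mem_iff hxy).mp ⟨hex.2, hey.2⟩
    have hxadj : G.Adj x y := by
      have := hex.1
      rw [he, SimpleGraph.mem_edgeSet] at this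
      exact this
    exact hbip x y hxadj (by
      rw [(Finset.mem_filter.mp hx).2, (Finset.mem_filter.mp hy).2])

lemma stmt5_aux_parent {V : Type*} (G : SimpleGraph V) (hconn : G.Connected)
    {r u : V} (h : u ≠ r) :
    ∃ w, G.Adj u w ∧ G.dist w r + 1 = G.dist u r := by
  obtain ⟨p, hp⟩ := hconn.exists_walk_length_eq_dist u r
  cases p with
  | nil => exact absurd rfl h
  | @cons _ w _ ha q =>
    refine ⟨w, ha, ?_⟩
    have h1 : G.dist w r ≤ q.length := SimpleGraph.dist_le q
    have h2 : G.dist u r ≤ G.dist u w + G.dist w r := hconn.dist_triangle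
    have h3 : G.dist u w ≤ 1 := by
      simpa using SimpleGraph.dist_le (ha.toWalk)
    rw [SimpleGraph.Walk.length_cons] at hp
    omega

lemma stmt5_aux_pm {α : Type*} [Fintype α] (b : α → Bool) (g : α → ℚ) :
    ∑ v : α, (if b v then g v else -(g v))
      = ∑ v ∈ univ.filter (fun v => b v = true), g v
        - ∑ v ∈ univ.filter (fun v => b v = false), g v := by
  rw [Finset.sum_ite, sub_eq_add_neg, ← Finset.sum_neg_distrib]
  congr 2
  apply Finset.filter_congr
  intro v _
  simp

/-- Let `D`, `D'` be finite connected bipartite graphs (colorings `c`, `c'`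
into cyan = `true` and purple = `false` vertices) in which every purple vertex has
degree 2, and let `f : D' → D` be an epimorphism of bipartite graphs.  Writing
`e_Γ = |f⁻¹(Γ)|` for cyan vertices `Γ` and `i_x = |f⁻¹(x)|` for purple vertices `x`,
if `i_x ≥ e_Γ` whenever `x` is purple and adjacent to the cyan vertex `Γ`, then
`β(D) ≤ β(D')`, where `β = 1 - |V| + |E|` is the Betti number. -/
theorem stmt5 {V V' : Type*} [Finite V] [Finite V']
    (D : SimpleGraph V) (D' : SimpleGraph V')
    (c : V → Bool) (c' : V' → Bool)
    (hbip : ∀ v w, D.Adj v w → c v ≠ c w)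
    (hbip' : ∀ v w, D'.Adj v w → c' v ≠ c' w)
    (hdeg : ∀ v, c v = false → (D.neighborSet v).ncard = 2)
    (hdeg' : ∀ v, c' v = false → (D'.neighborSet v).ncard = 2)
    (hconn : D.Connected) (hconn' : D'.Connected)
    (f : V' → V)
    (hcol : ∀ v, c (f v) = c' v)
    (hhom : ∀ v w, D'.Adj v w → D.Adj (f v) (f w))
    (hsurj : Function.Surjective f)
    (hlift : ∀ v w, D.Adj v w → ∃ v' w', D'.Adj v' w' ∧ f v' = v ∧ f w' = w)
    (hie : ∀ x Γ, c x = false → c Γ = true → D.Adj x Γ →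
      (f ⁻¹' {Γ}).ncard ≤ (f ⁻¹' {x}).ncard) :
    1 - (Nat.card V : ℤ) + (D.edgeSet.ncard : ℤ) ≤
      1 - (Nat.card V' : ℤ) + (D'.edgeSet.ncard : ℤ) := by
  classical
  haveI : Fintype V := Fintype.ofFinite V
  haveI : Fintype V' := Fintype.ofFinite V'
  -- fiber sizes
  set E : V' → ℕ := fun v' => (f ⁻¹' {f v'}).ncard with hE
  have hfib : ∀ v : V, (f ⁻¹' {v}).ncard = (univ.filter (fun w => f w = v)).card := by
    intro v
    rw [Set.ncard_eq_toFinset_card']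
    congr 1
    ext w
    simp
  have hE1 : ∀ v' : V', 1 ≤ E v' := fun v' =>
    (Set.ncard_pos (Set.toFinite _)).mpr ⟨v', rfl⟩
  have hEQ1 : ∀ v' : V', (1 : ℚ) ≤ (E v' : ℚ) := fun v' => by exact_mod_cast hE1 v'
  have hEQ0 : ∀ v' : V', (0 : ℚ) < (E v' : ℚ) := fun v' => lt_of_lt_of_le one_pos (hEQ1 v')
  -- the fiberwise sum identity
  have key : ∑ v' : V', ((if c' v' then (1:ℚ) else -1) / (E v' : ℚ))
      = ∑ v : V, (if c v then (1:ℚ) else -1) := by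
    rw [← Finset.sum_fiberwise_of_maps_to (g := f) (fun i _ => Finset.mem_univ (f i))]
    apply Finset.sum_congr rfl
    intro v _
    obtain ⟨v₀, hv₀⟩ := hsurj v
    have hcard : ((univ.filter (fun w => f w = v)).card : ℚ) ≠ 0 := by
      have : v₀ ∈ univ.filter (fun w => f w = v) := by simp [hv₀]
      have h1 : 0 < (univ.filter (fun w => f w = v)).card := Finset.card_pos.mpr ⟨v₀, this⟩
      positivity
    have hterm : ∀ v' ∈ univ.filter (fun w => f w = v),
        ((if c' v' then (1:ℚ) else -1) / (E v' : ℚ))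
          = (if c v then (1:ℚ) else -1) / ((univ.filter (fun w => f w = v)).card : ℚ) := by
      intro v' hv'
      have hfv : f v' = v := by simpa using (Finset.mem_filter.mp hv').2
      rw [← hcol v', hE]
      simp only [hfv, hfib v]
    rw [Finset.sum_congr rfl hterm, Finset.sum_const, nsmul_eq_mul, mul_comm,
      div_mul_cancel₀ _ hcard]
  -- root
  obtain ⟨r, hr⟩ : ∃ r : V', c' r = true := by
    obtain ⟨v₀⟩ := hconn'.nonempty
    cases h0 : c' v₀
    · have h2 := hdeg' v₀ h0
      have hpos : 0 < (D'.neighborSet v₀).ncard := by omega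
      obtain ⟨w, hw⟩ := (Set.ncard_pos (Set.toFinite _)).mp hpos
      have hne := hbip' v₀ w hw
      refine ⟨w, ?_⟩
      cases hcw : c' w
      · exact absurd (h0.trans hcw.symm) hne
      · rfl
    · exact ⟨v₀, h0⟩
  -- parent function
  have Hpar : ∀ u : V', u ≠ r → ∃ w, D'.Adj u w ∧ D'.dist w r + 1 = D'.dist u r :=
    fun u h => stmt5_aux_parent D' hconn' h
  choose pa hadj hdist using Hpar
  -- the weight function
  set T : V' → ℚ := fun v' => 1 - 1 / (E v' : ℚ) with hT
  have hT0 : ∀ v', 0 ≤ T v' := by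
    intro v'
    have := hEQ1 v'
    have h0 := hEQ0 v'
    rw [hT]
    simp only
    rw [sub_nonneg, div_le_one h0]
    exact this
  have hT1 : ∀ v', T v' < 1 := by
    intro v'
    have h0 := hEQ0 v'
    rw [hT]
    simp only
    have : 0 < 1 / (E v' : ℚ) := by positivity
    linarith
  -- cyan/purple finsets
  set Cy : Finset V' := univ.filter (fun v => c' v = true) with hCy
  set Pu : Finset V' := univ.filter (fun v => c' v = false) with hPu
  set CyV : Finset V := univ.filter (fun v => c v = true) with hCyV
  set PuV : Finset V := univ.filter (fun v => c v = false) with hPuV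
  have hrCy : r ∈ Cy := by simp [hCy, hr]
  -- properties of the parent map on A
  set A : Finset V' := Cy.erase r with hA
  have hmemA : ∀ u ∈ A, u ≠ r ∧ c' u = true := by
    intro u hu
    rw [hA, Finset.mem_erase] at hu
    exact ⟨hu.1, by simpa [hCy] using hu.2⟩
  have hpurple : ∀ u (h : u ≠ r), c' u = true → c' (pa u h) = false := by
    intro u h hcu
    have := hbip' u (pa u h) (hadj u h)
    rw [hcu] at this
    cases hcp : c' (pa u h)
    · rfl
    · exact absurd hcp.symm this
  have hTle : ∀ u (h : u ≠ r), c' u = true → T u ≤ T (pa u h) := by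
    intro u h hcu
    have hieu : (f ⁻¹' {f u}).ncard ≤ (f ⁻¹' {f (pa u h)}).ncard := by
      apply hie (f (pa u h)) (f u)
      · rw [hcol]; exact hpurple u h hcu
      · rw [hcol]; exact hcu
      · exact hhom _ _ (hadj u h).symm
    rw [hT]
    simp only
    have h1 : (1:ℚ) ≤ (E u : ℚ) := hEQ1 u
    have h2 : (E u : ℚ) ≤ (E (pa u h) : ℚ) := by exact_mod_cast hieu
    have := one_div_le_one_div_of_le (lt_of_lt_of_le one_pos h1) h2
    linarith
  -- injectivity
  have hinj : ∀ u₁ ∈ A, ∀ u₂ ∈ A, (∀ (h₁ : u₁ ≠ r) (h₂ : u₂ ≠ r), pa u₁ h₁ = pa u₂ h₂ → u₁ = u₂) := by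
    intro u₁ hu₁ u₂ hu₂ h₁ h₂ heq
    by_contra hne
    set w := pa u₁ h₁ with hw
    have hcw : c' w = false := hpurple u₁ h₁ (hmemA u₁ hu₁).2
    have hwr : w ≠ r := fun h => by rw [h, hr] at hcw; exact Bool.true_eq_false.mp hcw
    set w₂ := pa w hwr with hw₂
    have hd1 : D'.dist w r + 1 = D'.dist u₁ r := hdist u₁ h₁
    have hd2 : D'.dist w r + 1 = D'.dist u₂ r := heq ▸ hdist u₂ h₂
    have hd3 : D'.dist w₂ r + 1 = D'.dist w r := hdist w hwr
    have hne1 : u₁ ≠ w₂ := fun h => by rw [← h] at hd3; omega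
    have hne2 : u₂ ≠ w₂ := fun h => by rw [← h] at hd3; omega
    have hsub : ({u₁, u₂, w₂} : Set V') ⊆ D'.neighborSet w := by
      intro z hz
      rcases hz with hz | hz | hz
      · rw [hz]; exact (hadj u₁ h₁).symm
      · rw [hz]; exact (heq ▸ (hadj u₂ h₂).symm)
      · rw [hz]; exact hadj w hwr
    have h3 : ({u₁, u₂, w₂} : Set V').ncard = 3 := by
      rw [Set.ncard_insert_of_notMem (by simp [hne, hne1]) (Set.toFinite _),
        Set.ncard_insert_of_notMem (by simp [hne2]) (Set.toFinite _), Set.ncard_singleton]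
    have hle := Set.ncard_le_ncard hsub (Set.toFinite _)
    rw [h3, hdeg' w hcw] at hle
    omega
  -- the sum bound
  have hsumA : ∑ u ∈ A, T u ≤ ∑ w ∈ Pu, T w := by
    have step1 : ∑ u ∈ A, T u ≤ ∑ u ∈ A, T (if h : u = r then u else pa u h) := by
      apply Finset.sum_le_sum
      intro u hu
      obtain ⟨hne, hcu⟩ := hmemA u hu
      rw [dif_neg hne]
      exact hTle u hne hcu
    have step2 : ∑ u ∈ A, T (if h : u = r then u else pa u h)
        = ∑ w ∈ A.image (fun u => if h : u = r then u else pa u h), T w := by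
      rw [Finset.sum_image]
      intro x hx y hy hxy
      obtain ⟨hxne, -⟩ := hmemA x hx
      obtain ⟨hyne, -⟩ := hmemA y hy
      simp only [dif_neg hxne, dif_neg hyne] at hxy
      exact hinj x hx y hy hxne hyne hxy
    have step3 : ∑ w ∈ A.image (fun u => if h : u = r then u else pa u h), T w
        ≤ ∑ w ∈ Pu, T w := by
      apply Finset.sum_le_sum_of_subset_of_nonneg
      · intro w hw
        rw [Finset.mem_image] at hw
        obtain ⟨u, hu, hw⟩ := hw
        obtain ⟨hune, hcu⟩ := hmemA u hu
        rw [dif_neg hune] at hw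
        rw [hPu, Finset.mem_filter]
        exact ⟨Finset.mem_univ _, hw ▸ hpurple u hune hcu⟩
      · exact fun w _ _ => hT0 w
    exact step1.trans (step2 ▸ step3)
  -- putting the χ computation together
  have hchi : (∑ v ∈ Cy, T v) - (∑ v ∈ Pu, T v)
      = (∑ v' : V', (if c' v' then (1:ℚ) else -1))
        - (∑ v : V, (if c v then (1:ℚ) else -1)) := by
    rw [← key, ← Finset.sum_sub_distrib, ← stmt5_aux_pm c' T]
    apply Finset.sum_congr rfl
    intro v' _
    rw [hT]
    cases h : c' v' <;> simp <;> ring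
  have hmain : (∑ v' : V', (if c' v' then (1:ℚ) else -1))
      - (∑ v : V, (if c v then (1:ℚ) else -1)) < 1 := by
    rw [← hchi]
    have := Finset.sum_erase_add Cy T hrCy
    rw [hA] at hsumA
    have hTr := hT1 r
    linarith [hsumA, this, hTr]
  -- translate sums into cardinalities
  have hcards' : (∑ v' : V', (if c' v' then (1:ℚ) else -1)) = (Cy.card : ℚ) - Pu.card := by
    rw [show (fun v' => if c' v' then (1:ℚ) else -1) = fun v' => if c' v' then (1:ℚ) else -(1:ℚ) by rfl]
    rw [stmt5_aux_pm c' (fun _ => (1:ℚ))]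
    simp [hCy, hPu]
  have hcards : (∑ v : V, (if c v then (1:ℚ) else -1)) = (CyV.card : ℚ) - PuV.card := by
    rw [show (fun v => if c v then (1:ℚ) else -1) = fun v => if c v then (1:ℚ) else -(1:ℚ) by rfl]
    rw [stmt5_aux_pm c (fun _ => (1:ℚ))]
    simp [hCyV, hPuV]
  rw [hcards, hcards'] at hmain
  have hZ : (Cy.card : ℤ) - Pu.card ≤ (CyV.card : ℤ) - PuV.card := by
    have : ((Cy.card : ℚ) - Pu.card) - ((CyV.card : ℚ) - PuV.card) < 1 := by linarith
    have h2 : (((Cy.card : ℤ) - Pu.card) - ((CyV.card : ℤ) - PuV.card) : ℚ)  < 1 := by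
      push_cast
      linarith
    have h3 : ((Cy.card : ℤ) - Pu.card) - ((CyV.card : ℤ) - PuV.card) < 1 := by
      exact_mod_cast h2
    omega
  -- cardinalities of vertex sets
  have hV : (Nat.card V : ℤ) = (CyV.card : ℤ) + PuV.card := by
    rw [Nat.card_eq_fintype_card]
    have := Finset.card_filter_add_card_filter_not (s := (univ : Finset V))
      (p := fun v => c v = true)
    rw [show (univ.filter (fun v : V => ¬ c v = true)) = PuV by
      rw [hPuV]; apply Finset.filter_congr; intro v _; simp] at this
    rw [← Finset.card_univ, ← this, hCyV]
    push_cast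
    ring
  have hV' : (Nat.card V' : ℤ) = (Cy.card : ℤ) + Pu.card := by
    rw [Nat.card_eq_fintype_card]
    have := Finset.card_filter_add_card_filter_not (s := (univ : Finset V'))
      (p := fun v => c' v = true)
    rw [show (univ.filter (fun v : V' => ¬ c' v = true)) = Pu by
      rw [hPu]; apply Finset.filter_congr; intro v _; simp] at this
    rw [← Finset.card_univ, ← this, hCy]
    push_cast
    ring
  -- edge counts
  have hEdge : (D.edgeSet.ncard : ℤ) = 2 * PuV.card := by
    have h1 : D.edgeSet.ncard = D.edgeFinset.card := by
      rw [← SimpleGraph.coe_edgeFinset, Set.ncard_coe_finset]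
    rw [h1, stmt5_aux_edges D c hbip hdeg, hPuV]
    push_cast
    ring
  have hEdge' : (D'.edgeSet.ncard : ℤ) = 2 * Pu.card := by
    have h1 : D'.edgeSet.ncard = D'.edgeFinset.card := by
      rw [← SimpleGraph.coe_edgeFinset, Set.ncard_coe_finset]
    rw [h1, stmt5_aux_edges D' c' hbip' hdeg', hPu]
    push_cast
    ring
  rw [hV, hV', hEdge, hEdge']
  linarith
end

section
/- Let K be a field with a henselian discrete valuation w whose residue field κ has characteristic different from 2. Let ℓ ∈ ℕ. If the level of κ satisfies s(κ) ≥ 2^{ℓ+1}, then ρ_ℓ(K) ≤ ρ_ℓ(κ); if s(κ) = 2^ℓ, then ρ_ℓ(K) ≤ 1 + ρ_ℓ(κ). Here ρ_ℓ(L) = log₂ of the index of the group of nonzero sums of 2^ℓ squares inside the group of nonzero sums of 2^{ℓ+1} squares in L. -/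
/-- The set of elements of `K` that are sums of `m` squares. -/
def sosN (K : Type*) [Field K] (m : ℕ) : Set K :=
  {x | ∃ f : Fin m → K, x = ∑ i, f i ^ 2}

/-- The set of cosets of the (Pfister) group of nonzero sums of `2^ℓ` squares inside
the group of nonzero sums of `2^(ℓ+1)` squares; its cardinality is `2 ^ ρ_ℓ(K)`,
where `ρ_ℓ(K)` is the `ℓ`-th Pfister index of `K`. -/
def pfisterCosets (K : Type*) [Field K] (ℓ : ℕ) : Set (Set K) :=
  {S | ∃ x : K, x ≠ 0 ∧ x ∈ sosN K (2 ^ (ℓ + 1)) ∧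
    S = {y | ∃ t : K, t ≠ 0 ∧ t ∈ sosN K (2 ^ ℓ) ∧ y = x * t}}


section Basics
variable {L : Type*} [Field L]

lemma sosN_zero_mem (m : ℕ) : (0 : L) ∈ sosN L m :=
  ⟨0, by simp⟩

lemma sosN_add {x y : L} {m n : ℕ} (hx : x ∈ sosN L m) (hy : y ∈ sosN L n) :
    x + y ∈ sosN L (m + n) := by
  obtain ⟨f, rfl⟩ := hx
  obtain ⟨g, rfl⟩ := hy
  exact ⟨Fin.append f g, by rw [Fin.sum_univ_add]; simp⟩

lemma sosN_mono {m n : ℕ} (h : m ≤ n) : sosN L m ⊆ sosN L n := by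
  intro x hx
  have := sosN_add hx (sosN_zero_mem (L := L) (n - m))
  rwa [add_zero, Nat.add_sub_cancel' h] at this

lemma sq_mem_sosN (c : L) {m : ℕ} (hm : m ≠ 0) : c ^ 2 ∈ sosN L m := by
  refine sosN_mono (Nat.one_le_iff_ne_zero.2 hm) ⟨fun _ => c, ?_⟩
  simp

lemma one_mem_sosN {m : ℕ} (hm : m ≠ 0) : (1 : L) ∈ sosN L m := by
  simpa using sq_mem_sosN (1 : L) hm

lemma sosN_mul_sq {x : L} {m : ℕ} (hx : x ∈ sosN L m) (c : L) :
    x * c ^ 2 ∈ sosN L m := by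
  obtain ⟨f, rfl⟩ := hx
  exact ⟨fun i => f i * c, by rw [Finset.sum_mul]; simp [mul_pow]⟩

/-- reindexing: a vanishing sum of squares with a nonzero entry gives `-1` as a
sum of `m-1` squares. -/
lemma neg_one_sos_of_sum_sq_eq_zero {m : ℕ} {c : Fin (m+1) → L}
    (h : ∑ i, c i ^ 2 = 0) {i₀ : Fin (m+1)} (hi₀ : c i₀ ≠ 0) :
    (-1 : L) ∈ sosN L m := by
  refine ⟨fun j => c (i₀.succAbove j) / c i₀, ?_⟩
  have hs := Fin.sum_univ_succAbove (fun i => c i ^ 2) i₀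
  rw [h] at hs
  have h2 : (c i₀)^2 ≠ 0 := pow_ne_zero _ hi₀
  have hsum : ∑ j : Fin m, c (i₀.succAbove j) ^ 2 = -(c i₀ ^ 2) := by
    linear_combination -hs
  simp only [div_pow, ← Finset.sum_div, hsum]
  rw [neg_div, div_self h2]

/-- if the level is `≥ m`, a vanishing sum of `m` squares has all terms zero. -/
lemma level_sum_sq {m : ℕ}
    (hlev : ∀ m' < m, (-1 : L) ∉ sosN L m')
    {c : Fin m → L} (h : ∑ i, c i ^ 2 = 0) : ∀ i, c i = 0 := by
  intro i
  by_contra hi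
  cases m with
  | zero => exact i.elim0
  | succ n => exact hlev n (Nat.lt_succ_self n) (neg_one_sos_of_sum_sq_eq_zero h hi)

/-- if `-1` is a sum of `2^ℓ` squares, every element is a sum of `2^(ℓ+1)` squares. -/
lemma all_mem_sosN (hchar : (2 : L) ≠ 0) {ℓ : ℕ}
    (hneg1 : (-1 : L) ∈ sosN L (2 ^ ℓ)) (a : L) : a ∈ sosN L (2 ^ (ℓ + 1)) := by
  have key : a = ((a+1)/2)^2 + (-1) * ((a-1)/2)^2 := by field_simp; ring
  have h1 : ((a+1)/2)^2 ∈ sosN L 1 := sq_mem_sosN _ one_ne_zero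
  have h2 : (-1 : L) * ((a-1)/2)^2 ∈ sosN L (2 ^ ℓ) := sosN_mul_sq hneg1 _
  have := sosN_add h1 h2
  rw [← key] at this
  refine sosN_mono ?_ this
  have : 1 ≤ 2 ^ ℓ := Nat.one_le_two_pow
  rw [pow_succ]
  omega

end Basics

section DVR
open IsLocalRing Polynomial

set_option linter.unusedSectionVars false

variable {K O : Type*} [Field K] [CommRing O] [IsDomain O]
  [IsDiscreteValuationRing O] [HenselianLocalRing O] [Algebra O K] [IsFractionRing O K]

lemma hensel_sq (hchar : (2 : ResidueField O) ≠ 0) {a : O}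
    {c : ResidueField O} (hc : c ≠ 0) (hres : residue O a = c ^ 2) :
    ∃ v : O, v ^ 2 = a := by
  obtain ⟨a₀, ha₀⟩ := residue_surjective (R := O) c
  have h1 : (X ^ 2 - C a : O[X]).eval a₀ ∈ maximalIdeal O := by
    have : residue O ((X ^ 2 - C a : O[X]).eval a₀) = 0 := by
      simp only [eval_sub, eval_pow, eval_X, eval_C]
      rw [map_sub, map_pow, ha₀, hres, sub_self]
    by_contra hmem
    exact (residue_ne_zero_iff_isUnit _).2 (IsLocalRing.notMem_maximalIdeal.1 hmem) this
  have h2 : IsUnit ((X ^ 2 - C a : O[X]).derivative.eval a₀) := by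
    have hd : (X ^ 2 - C a : O[X]).derivative = C 2 * X := by
      simp [derivative_sub, derivative_X_pow]
      rw [map_ofNat C 2]; norm_num
    rw [hd]
    apply (residue_ne_zero_iff_isUnit _).1
    rw [eval_mul, eval_C, eval_X, map_mul, ha₀]
    exact mul_ne_zero hchar hc
  obtain ⟨v, hv, -⟩ := HenselianLocalRing.is_henselian (X ^ 2 - C a : O[X])
    (monic_X_pow_sub_C a two_ne_zero) a₀ h1 h2
  refine ⟨v, ?_⟩
  have := hv
  simp only [IsRoot, eval_sub, eval_pow, eval_X, eval_C, sub_eq_zero] at this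
  exact this

lemma pi_ne_zero {ϖ : O} (hϖ : Irreducible ϖ) : algebraMap O K ϖ ≠ 0 :=
  fun h => hϖ.ne_zero ((map_eq_zero_iff _ (IsFractionRing.injective O K)).1 h)

lemma exists_unit_rep {ϖ : O} (hϖ : Irreducible ϖ) {x : K} (hx : x ≠ 0) :
    ∃ (u : O) (j : ℤ), IsUnit u ∧
      x = algebraMap O K u * algebraMap O K ϖ ^ j := by
  obtain ⟨a, b, hb, hab⟩ := IsFractionRing.div_surjective (A := O) x
  have hb0 : b ≠ 0 := nonZeroDivisors.ne_zero hb
  have ha0 : a ≠ 0 := by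
    rintro rfl
    rw [map_zero, zero_div] at hab
    exact hx hab.symm
  obtain ⟨n₁, u₁, hu₁⟩ := IsDiscreteValuationRing.eq_unit_mul_pow_irreducible ha0 hϖ
  obtain ⟨n₂, u₂, hu₂⟩ := IsDiscreteValuationRing.eq_unit_mul_pow_irreducible hb0 hϖ
  set π := algebraMap O K ϖ with hπdef
  have hπ : π ≠ 0 := pi_ne_zero hϖ
  refine ⟨u₁ * ↑u₂⁻¹, (n₁ : ℤ) - n₂, (u₁ * u₂⁻¹).isUnit, ?_⟩
  have hu2K : algebraMap O K ↑u₂ * algebraMap O K ↑u₂⁻¹ = 1 := by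
    rw [← map_mul, Units.mul_inv, map_one]
  have hu2ne : algebraMap O K (u₂ : O) ≠ 0 := by
    refine fun h => one_ne_zero (α := K) ?_
    rw [← hu2K, h, zero_mul]
  rw [← hab, hu₁, hu₂, map_mul, map_mul, map_pow, map_pow, map_mul]
  rw [zpow_sub₀ hπ, zpow_natCast, zpow_natCast, eq_inv_of_mul_eq_one_right hu2K]
  field_simp
  rw [← hπdef, mul_div_cancel_right₀ _ (pow_ne_zero _ hπ)]

lemma rep_unique {ϖ : O} (hϖ : Irreducible ϖ) {u u' : O} (hu : IsUnit u) (hu' : IsUnit u')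
    {j j' : ℤ}
    (h : algebraMap O K u * algebraMap O K ϖ ^ j
       = algebraMap O K u' * algebraMap O K ϖ ^ j') :
    u = u' ∧ j = j' := by
  set π := algebraMap O K ϖ with hπdef
  have hπ : π ≠ 0 := pi_ne_zero hϖ
  wlog hle : j' ≤ j generalizing u u' j j'
  · obtain ⟨h1, h2⟩ := this hu' hu h.symm (le_of_not_ge hle)
    exact ⟨h1.symm, h2.symm⟩
  have key : algebraMap O K (u * ϖ ^ (j - j').toNat) = algebraMap O K u' := by
    rw [map_mul, map_pow]
    have : (π : K) ^ ((j - j').toNat : ℤ) = π ^ (j - j') := by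
      rw [Int.toNat_of_nonneg (sub_nonneg.2 hle)]
    rw [← zpow_natCast (π) ((j - j').toNat), this, zpow_sub₀ hπ, mul_div_assoc', h,
      mul_div_cancel_right₀ _ (zpow_ne_zero _ hπ)]
  have keyO : u * ϖ ^ (j - j').toNat = u' := IsFractionRing.injective O K key
  have hunit : IsUnit (ϖ ^ (j - j').toNat) := by
    have := keyO ▸ hu'
    exact (isUnit_of_mul_isUnit_right (by rwa [mul_comm] at this))
  have hd0 : (j - j').toNat = 0 := by
    by_contra hd
    exact hϖ.not_isUnit (isUnit_of_dvd_unit (dvd_pow_self ϖ hd) hunit)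
  have hj : j = j' := by omega
  refine ⟨?_, hj⟩
  rw [hd0, pow_zero, mul_one] at keyO
  exact keyO

lemma lift_sos {m : ℕ} {t : ResidueField O} (ht0 : t ≠ 0)
    (ht : t ∈ sosN (ResidueField O) m) :
    ∃ w : O, IsUnit w ∧ residue O w = t ∧ algebraMap O K w ∈ sosN K m := by
  obtain ⟨c, hc⟩ := ht
  choose b hb using fun i => residue_surjective (R := O) (c i)
  refine ⟨∑ i, b i ^ 2, ?_, ?_, ?_⟩
  · apply (residue_ne_zero_iff_isUnit _).1
    rw [map_sum]
    simp only [map_pow, hb]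
    rw [← hc]
    exact ht0
  · rw [map_sum]
    simp only [map_pow, hb]
    exact hc.symm
  · exact ⟨fun i => algebraMap O K (b i), by rw [map_sum]; simp⟩

end DVR

section DVR2
open IsLocalRing Polynomial
set_option linter.unusedSectionVars false

variable {K O : Type*} [Field K] [CommRing O] [IsDomain O]
  [IsDiscreteValuationRing O] [HenselianLocalRing O] [Algebra O K] [IsFractionRing O K]

/-- (★⊇): a unit whose residue is a nonzero sum of `m` squares, times an even power
of the uniformizer, is a nonzero sum of `m` squares in `K`. -/
lemma mem_sosN_of_unit_rep (hchar : (2 : ResidueField O) ≠ 0)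
    {ϖ : O} (hϖ : Irreducible ϖ) {m : ℕ}
    {w : O} (hw : IsUnit w) (hres : residue O w ∈ sosN (ResidueField O) m)
    (k : ℤ) :
    algebraMap O K w * algebraMap O K ϖ ^ (2 * k) ≠ 0 ∧
      algebraMap O K w * algebraMap O K ϖ ^ (2 * k) ∈ sosN K m := by
  set π := algebraMap O K ϖ with hπdef
  have hπ : π ≠ 0 := pi_ne_zero hϖ
  have hres0 : residue O w ≠ 0 := (residue_ne_zero_iff_isUnit w).2 hw
  obtain ⟨w', hw', hresw', hsos⟩ := lift_sos (K := K) hres0 hres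
  -- the unit `w * w'⁻¹` has residue 1, hence is a square
  have hinv : residue O (↑hw'.unit⁻¹) = (residue O w')⁻¹ := by
    refine eq_inv_of_mul_eq_one_left ?_
    rw [← map_mul]
    simp
  have hres1 : residue O (w * ↑hw'.unit⁻¹) = 1 ^ 2 := by
    rw [map_mul, hinv, hresw', one_pow]
    exact mul_inv_cancel₀ (hresw' ▸ hres0)
  obtain ⟨v, hv⟩ := hensel_sq hchar one_ne_zero hres1
  have hwE : w = w' * v ^ 2 := by
    have : w * ↑hw'.unit⁻¹ * w' = w' * v ^ 2 := by rw [hv]; ring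
    calc w = w * (↑hw'.unit⁻¹ * w') := by
              rw [← mul_one w]
              congr 1
              rw [mul_one]
              have := hw'.unit.inv_mul
              simpa using this.symm
      _ = w' * v ^ 2 := by rw [← mul_assoc]; exact this
  constructor
  · exact mul_ne_zero
      (fun h => hw.ne_zero (by simpa using (map_eq_zero_iff _ (IsFractionRing.injective O K)).1 h))
      (zpow_ne_zero _ hπ)
  · have hsq : algebraMap O K w * π ^ (2 * k)
        = algebraMap O K w' * (algebraMap O K v * π ^ k) ^ 2 := by
      have hp : (π ^ k) ^ (2 : ℕ) = π ^ (2 * k) := by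
        rw [← zpow_natCast (π ^ k) 2, ← zpow_mul]
        norm_num [mul_comm]
      rw [hwE, map_mul, map_pow, mul_pow, ← hp]
      ring
    rw [hsq]
    exact sosN_mul_sq hsos _
end DVR2

section DVR3
open IsLocalRing Polynomial
set_option linter.unusedSectionVars false

variable {K O : Type*} [Field K] [CommRing O] [IsDomain O]
  [IsDiscreteValuationRing O] [HenselianLocalRing O] [Algebra O K] [IsFractionRing O K]

/-- (★⊆): if the residue level is `≥ m`, every nonzero sum of `m` squares in `K` is a
unit with residue a nonzero sum of `m` squares, times an even power of the uniformizer. -/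
lemma sos_structure {ϖ : O} (hϖ : Irreducible ϖ) {m : ℕ}
    (hlev : ∀ m' < m, (-1 : ResidueField O) ∉ sosN (ResidueField O) m')
    {x : K} (hx : x ≠ 0) (hxs : x ∈ sosN K m) :
    ∃ (u : O) (k : ℤ), IsUnit u ∧ residue O u ≠ 0 ∧
      residue O u ∈ sosN (ResidueField O) m ∧
      x = algebraMap O K u * algebraMap O K ϖ ^ (2 * k) := by
  classical
  set π := algebraMap O K ϖ with hπdef
  have hπ : π ≠ 0 := pi_ne_zero hϖ
  obtain ⟨f, hf⟩ := hxs
  have hrep : ∀ i, ∃ (u : O) (j : ℤ), (f i ≠ 0 → IsUnit u) ∧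
      f i = algebraMap O K u * π ^ j := by
    intro i
    by_cases h : f i = 0
    · exact ⟨0, 0, fun h' => absurd h h', by simp [h]⟩
    · obtain ⟨u, j, hu, he⟩ := exists_unit_rep hϖ h
      exact ⟨u, j, fun _ => hu, he⟩
  choose uu jj huu hfe using hrep
  set s : Finset (Fin m) := Finset.univ.filter (fun i => f i ≠ 0) with hs
  have hsne : s.Nonempty := by
    by_contra h
    rw [Finset.not_nonempty_iff_eq_empty] at h
    apply hx
    rw [hf]
    apply Finset.sum_eq_zero
    intro i _
    have hfi : f i = 0 := by
      by_contra hfi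
      have : i ∈ s := by simp [hs, hfi]
      simp [h] at this
    simp [hfi]
  obtain ⟨i₀, hi₀s, hmin⟩ := s.exists_min_image jj hsne
  have hfi₀ : f i₀ ≠ 0 := by simpa [hs] using hi₀s
  set n := jj i₀ with hn
  set g : Fin m → O := fun i => if f i = 0 then 0 else uu i * ϖ ^ (jj i - n).toNat with hg
  have hgf : ∀ i, f i = algebraMap O K (g i) * π ^ n := by
    intro i
    by_cases h : f i = 0
    · simp [hg, h]
    · have hiin : i ∈ s := by simp [hs, h]
      have hni : n ≤ jj i := hmin i hiin
      simp only [hg, if_neg h]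
      rw [map_mul, map_pow]
      rw [← zpow_natCast π ((jj i - n).toNat), Int.toNat_of_nonneg (sub_nonneg.2 hni)]
      rw [mul_assoc, ← zpow_add₀ hπ, sub_add_cancel]
      exact hfe i
  have hgres : residue O (g i₀) ≠ 0 := by
    have hti : (jj i₀ - n).toNat = 0 := by simp [hn]
    have : g i₀ = uu i₀ := by simp [hg, if_neg hfi₀, hti]
    rw [this]
    exact (residue_ne_zero_iff_isUnit _).2 (huu i₀ hfi₀)
  have hres : residue O (∑ i, g i ^ 2) = ∑ i, residue O (g i) ^ 2 := by
    rw [map_sum]; simp only [map_pow]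
  have hne : residue O (∑ i, g i ^ 2) ≠ 0 := by
    rw [hres]
    intro h0
    exact hgres (level_sum_sq hlev h0 i₀)
  have hp : (π ^ n) ^ (2 : ℕ) = π ^ (2 * n) := by
    rw [← zpow_natCast (π ^ n) 2, ← zpow_mul]
    norm_num [mul_comm]
  refine ⟨∑ i, g i ^ 2, n, (residue_ne_zero_iff_isUnit _).1 hne, hne,
    ⟨fun i => residue O (g i), hres⟩, ?_⟩
  rw [hf]
  calc ∑ i, f i ^ 2 = ∑ i, algebraMap O K (g i) ^ 2 * (π ^ n) ^ 2 := by
        refine Finset.sum_congr rfl fun i _ => ?_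
        rw [hgf i, mul_pow]
    _ = (∑ i, algebraMap O K (g i) ^ 2) * (π ^ n) ^ 2 := (Finset.sum_mul _ _ _).symm
    _ = algebraMap O K (∑ i, g i ^ 2) * π ^ (2 * n) := by
        rw [hp, map_sum]
        simp only [map_pow]
end DVR3


section Coset
open IsLocalRing
set_option linter.unusedSectionVars false

variable {K O : Type*} [Field K] [CommRing O] [IsDomain O]
  [IsDiscreteValuationRing O] [HenselianLocalRing O] [Algebra O K] [IsFractionRing O K]

/-- the reduction map on subsets of `K`. -/
def Fmap (K : Type*) {O : Type*} [Field K] [CommRing O] [IsLocalRing O] [Algebra O K]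
    (ϖ : O) (S : Set K) : Set (ResidueField O) :=
  {c | ∃ y ∈ S, ∃ (u : O) (j : ℤ), IsUnit u ∧
    y = algebraMap O K u * algebraMap O K ϖ ^ j ∧ c = residue O u}

lemma Fmap_coset {ϖ : O} (hϖ : Irreducible ϖ) {ℓ : ℕ}
    (hlev : ∀ m' < 2 ^ ℓ, (-1 : ResidueField O) ∉ sosN (ResidueField O) m')
    {x : K} {ux : O} {jx : ℤ} (hux : IsUnit ux)
    (hx : x = algebraMap O K ux * algebraMap O K ϖ ^ jx) :
    Fmap K ϖ {y | ∃ t : K, t ≠ 0 ∧ t ∈ sosN K (2 ^ ℓ) ∧ y = x * t}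
      = {c | ∃ t, t ≠ 0 ∧ t ∈ sosN (ResidueField O) (2 ^ ℓ) ∧ c = residue O ux * t} := by
  have hπ : algebraMap O K ϖ ≠ 0 := pi_ne_zero hϖ
  ext c
  constructor
  · rintro ⟨y, ⟨t, ht0, hts, rfl⟩, u, j, hu, hy, rfl⟩
    obtain ⟨w, k, hw, hw0, hwm, ht⟩ := sos_structure hϖ hlev ht0 hts
    have hy2 : x * t = algebraMap O K (ux * w) * algebraMap O K ϖ ^ (jx + 2 * k) := by
      rw [hx, ht, map_mul, zpow_add₀ hπ]
      ring
    obtain ⟨hueq, -⟩ := rep_unique hϖ hu (hux.mul hw) (hy.symm.trans hy2)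
    exact ⟨residue O w, hw0, hwm, by rw [hueq, map_mul]⟩
  · rintro ⟨t, ht0, hts, rfl⟩
    obtain ⟨w, hw, hwres, hwsos⟩ := lift_sos (K := K) ht0 hts
    have hwK0 : algebraMap O K w ≠ 0 := fun h =>
      hw.ne_zero ((map_eq_zero_iff _ (IsFractionRing.injective O K)).1 h)
    refine ⟨x * algebraMap O K w, ⟨algebraMap O K w, hwK0, hwsos, rfl⟩,
      ux * w, jx, hux.mul hw, ?_, by rw [map_mul, hwres]⟩
    rw [hx, map_mul]
    ring

lemma coset_recover (hchar : (2 : ResidueField O) ≠ 0) {ϖ : O} (hϖ : Irreducible ϖ) {ℓ : ℕ}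
    (hlev : ∀ m' < 2 ^ ℓ, (-1 : ResidueField O) ∉ sosN (ResidueField O) m')
    {x : K} {ux : O} {jx : ℤ} (hux : IsUnit ux)
    (hx : x = algebraMap O K ux * algebraMap O K ϖ ^ jx) :
    {y | ∃ t : K, t ≠ 0 ∧ t ∈ sosN K (2 ^ ℓ) ∧ y = x * t}
      = {y | ∃ (u : O) (j : ℤ), IsUnit u ∧
          y = algebraMap O K u * algebraMap O K ϖ ^ j ∧
          (∃ t, t ≠ 0 ∧ t ∈ sosN (ResidueField O) (2 ^ ℓ) ∧ residue O u = residue O ux * t) ∧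
          Even (j - jx)} := by
  have hπ : algebraMap O K ϖ ≠ 0 := pi_ne_zero hϖ
  have hux0 : algebraMap O K ux ≠ 0 := fun h =>
    hux.ne_zero ((map_eq_zero_iff _ (IsFractionRing.injective O K)).1 h)
  ext y
  constructor
  · rintro ⟨t, ht0, hts, rfl⟩
    obtain ⟨w, k, hw, hw0, hwm, ht⟩ := sos_structure hϖ hlev ht0 hts
    refine ⟨ux * w, jx + 2 * k, hux.mul hw, ?_,
      ⟨residue O w, hw0, hwm, by rw [map_mul]⟩, ⟨k, by ring⟩⟩
    rw [hx, ht, map_mul, zpow_add₀ hπ]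
    ring
  · rintro ⟨u, j, hu, hy, ⟨t, ht0, hts, hresu⟩, ⟨k, hk⟩⟩
    have hjeq : j = jx + 2 * k := by omega
    have h1 : algebraMap O K ↑hux.unit⁻¹ = (algebraMap O K ux)⁻¹ :=
      eq_inv_of_mul_eq_one_right (by rw [← map_mul]; simp)
    have hres1 : residue O ↑hux.unit⁻¹ = (residue O ux)⁻¹ :=
      eq_inv_of_mul_eq_one_right (by rw [← map_mul]; simp)
    have hw0unit : IsUnit (u * ↑hux.unit⁻¹) := hu.mul (Units.isUnit _)
    have hresw0 : residue O (u * ↑hux.unit⁻¹) = t := by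
      rw [map_mul, hresu, hres1, mul_comm (residue O ux) t, mul_assoc,
        mul_inv_cancel₀ ((residue_ne_zero_iff_isUnit ux).2 hux), mul_one]
    have hmem := mem_sosN_of_unit_rep (K := K) hchar hϖ hw0unit
      (by rw [hresw0]; exact hts) k
    refine ⟨algebraMap O K (u * ↑hux.unit⁻¹) * algebraMap O K ϖ ^ (2 * k),
      hmem.1, hmem.2, ?_⟩
    rw [hy, hjeq, hx, map_mul, h1, zpow_add₀ hπ]
    field_simp
end Coset

section Main
open IsLocalRing
set_option linter.unusedSectionVars false

variable {K O : Type*} [Field K] [CommRing O] [IsDomain O]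
  [IsDiscreteValuationRing O] [HenselianLocalRing O] [Algebra O K] [IsFractionRing O K]

lemma pc_inj (hchar : (2 : ResidueField O) ≠ 0) {ϖ : O} (hϖ : Irreducible ϖ) {ℓ : ℕ}
    (hlev : ∀ m' < 2 ^ ℓ, (-1 : ResidueField O) ∉ sosN (ResidueField O) m')
    {x₁ x₂ : K} {u₁ u₂ : O} {j₁ j₂ : ℤ} (hu₁ : IsUnit u₁) (hu₂ : IsUnit u₂)
    (hx₁ : x₁ = algebraMap O K u₁ * algebraMap O K ϖ ^ j₁)
    (hx₂ : x₂ = algebraMap O K u₂ * algebraMap O K ϖ ^ j₂)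
    (hC : {c | ∃ t, t ≠ 0 ∧ t ∈ sosN (ResidueField O) (2 ^ ℓ) ∧ c = residue O u₁ * t}
        = {c | ∃ t, t ≠ 0 ∧ t ∈ sosN (ResidueField O) (2 ^ ℓ) ∧ c = residue O u₂ * t})
    (hpar : Even (j₁ - j₂)) :
    {y : K | ∃ t, t ≠ 0 ∧ t ∈ sosN K (2 ^ ℓ) ∧ y = x₁ * t}
      = {y : K | ∃ t, t ≠ 0 ∧ t ∈ sosN K (2 ^ ℓ) ∧ y = x₂ * t} := by
  rw [coset_recover hchar hϖ hlev hu₁ hx₁, coset_recover hchar hϖ hlev hu₂ hx₂]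
  have hC' : ∀ c : ResidueField O,
      (∃ t, t ≠ 0 ∧ t ∈ sosN (ResidueField O) (2 ^ ℓ) ∧ c = residue O u₁ * t)
        ↔ (∃ t, t ≠ 0 ∧ t ∈ sosN (ResidueField O) (2 ^ ℓ) ∧ c = residue O u₂ * t) := by
    intro c
    exact Set.ext_iff.1 hC c
  obtain ⟨b, hb⟩ := hpar
  ext y
  constructor
  · rintro ⟨u, j, hu, hy, hin, ⟨a, ha⟩⟩
    exact ⟨u, j, hu, hy, (hC' _).1 hin, ⟨a + b, by omega⟩⟩
  · rintro ⟨u, j, hu, hy, hin, ⟨a, ha⟩⟩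
    exact ⟨u, j, hu, hy, (hC' _).2 hin, ⟨a - b, by omega⟩⟩

end Main

section Final
open IsLocalRing
set_option linter.unusedSectionVars false

/-- let `K` be a field with a henselian discrete valuation whose valuation
ring is `O` and whose residue field `κ` has characteristic `≠ 2`.  If the level of `κ`
satisfies `s(κ) ≥ 2^(ℓ+1)` then `ρ_ℓ(K) ≤ ρ_ℓ(κ)`, and if `s(κ) = 2^ℓ` then
`ρ_ℓ(K) ≤ 1 + ρ_ℓ(κ)`; in terms of the coset sets, the index
`[ (Σ^{2^(ℓ+1)} K²)^× : (Σ^{2^ℓ} K²)^× ]` is at most the corresponding index for `κ`,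
respectively at most twice it. -/
theorem stmt8 {K O : Type*} [Field K] [CommRing O] [IsDomain O]
    [IsDiscreteValuationRing O] [HenselianLocalRing O]
    [Algebra O K] [IsFractionRing O K] (ℓ : ℕ)
    (hchar : (2 : IsLocalRing.ResidueField O) ≠ 0) :
    ((∀ m, m < 2 ^ (ℓ + 1) → (-1 : IsLocalRing.ResidueField O) ∉
        sosN (IsLocalRing.ResidueField O) m) →
      (pfisterCosets K ℓ).encard ≤ (pfisterCosets (IsLocalRing.ResidueField O) ℓ).encard) ∧
    (((-1 : IsLocalRing.ResidueField O) ∈ sosN (IsLocalRing.ResidueField O) (2 ^ ℓ) ∧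
        ∀ m, m < 2 ^ ℓ → (-1 : IsLocalRing.ResidueField O) ∉
          sosN (IsLocalRing.ResidueField O) m) →
      (pfisterCosets K ℓ).encard ≤
        2 * (pfisterCosets (IsLocalRing.ResidueField O) ℓ).encard) := by
  obtain ⟨ϖ, hϖ⟩ := IsDiscreteValuationRing.exists_irreducible O
  constructor
  · -- case s(κ) ≥ 2^(ℓ+1)
    intro hlev'
    have hlev : ∀ m' < 2 ^ ℓ, (-1 : ResidueField O) ∉ sosN (ResidueField O) m' := fun m hm =>
      hlev' m (lt_of_lt_of_le hm (Nat.pow_le_pow_right (by norm_num) (Nat.le_succ ℓ)))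
    have hmaps : ∀ S ∈ pfisterCosets K ℓ,
        Fmap K ϖ S ∈ pfisterCosets (ResidueField O) ℓ := by
      rintro S ⟨x, hx0, hxs, rfl⟩
      obtain ⟨u, k, hu, hu0, hum, hxe⟩ := sos_structure hϖ hlev' hx0 hxs
      exact ⟨residue O u, hu0, hum, Fmap_coset hϖ hlev hu hxe⟩
    have hinj : Set.InjOn (Fmap K ϖ) (pfisterCosets K ℓ) := by
      rintro S₁ ⟨x₁, hx₁0, hx₁s, rfl⟩ S₂ ⟨x₂, hx₂0, hx₂s, rfl⟩ hFeq
      obtain ⟨u₁, k₁, hu₁, -, -, hxe₁⟩ := sos_structure hϖ hlev' hx₁0 hx₁s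
      obtain ⟨u₂, k₂, hu₂, -, -, hxe₂⟩ := sos_structure hϖ hlev' hx₂0 hx₂s
      have hC := (Fmap_coset (K := K) hϖ hlev hu₁ hxe₁).symm.trans
        (hFeq.trans (Fmap_coset (K := K) hϖ hlev hu₂ hxe₂))
      exact pc_inj hchar hϖ hlev hu₁ hu₂ hxe₁ hxe₂ hC ⟨k₁ - k₂, by ring⟩
    calc (pfisterCosets K ℓ).encard
        = (Fmap K ϖ '' pfisterCosets K ℓ).encard := hinj.encard_image.symm
      _ ≤ (pfisterCosets (ResidueField O) ℓ).encard := by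
          apply Set.encard_le_encard
          rintro c ⟨S, hS, rfl⟩
          exact hmaps S hS
  · -- case s(κ) = 2^ℓ
    rintro ⟨hneg1, hlev⟩
    have hall : ∀ a : ResidueField O, a ∈ sosN (ResidueField O) (2 ^ (ℓ + 1)) :=
      all_mem_sosN hchar hneg1
    set P : Set (Set K) := {S | ∃ y ∈ S, ∃ (u : O) (n : ℤ), IsUnit u ∧
      y = algebraMap O K u * algebraMap O K ϖ ^ (2 * n)} with hP
    have hparity : ∀ (x : K) (u : O) (j : ℤ), IsUnit u →
        x = algebraMap O K u * algebraMap O K ϖ ^ j →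
        ({y : K | ∃ t, t ≠ 0 ∧ t ∈ sosN K (2 ^ ℓ) ∧ y = x * t} ∈ P ↔ Even j) := by
      intro x u j hu hxe
      have hπ : algebraMap O K ϖ ≠ 0 := pi_ne_zero (K := K) hϖ
      constructor
      · rintro ⟨y, ⟨t, ht0, hts, rfl⟩, u', n, hu', hy⟩
        obtain ⟨w, k, hw, -, -, ht⟩ := sos_structure hϖ hlev ht0 hts
        have hxt : x * t = algebraMap O K (u * w) * algebraMap O K ϖ ^ (j + 2 * k) := by
          rw [hxe, ht, map_mul, zpow_add₀ hπ]
          ring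
        obtain ⟨-, hj⟩ := rep_unique hϖ hu' (hu.mul hw) (hy.symm.trans hxt)
        exact ⟨n - k, by omega⟩
      · rintro ⟨n, hn⟩
        have hj : j = 2 * n := by omega
        refine ⟨x, ⟨1, one_ne_zero, one_mem_sosN (by positivity), (mul_one x).symm⟩,
          u, n, hu, ?_⟩
        rw [hxe, hj]
    have hmaps : ∀ S ∈ pfisterCosets K ℓ,
        Fmap K ϖ S ∈ pfisterCosets (ResidueField O) ℓ := by
      rintro S ⟨x, hx0, hxs, rfl⟩
      obtain ⟨u, j, hu, hxe⟩ := exists_unit_rep (K := K) hϖ hx0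
      exact ⟨residue O u, (residue_ne_zero_iff_isUnit u).2 hu, hall _,
        Fmap_coset hϖ hlev hu hxe⟩
    have hinjP : ∀ b : Prop, Set.InjOn (Fmap K ϖ)
        {S | S ∈ pfisterCosets K ℓ ∧ (S ∈ P ↔ b)} := by
      intro b
      rintro S₁ ⟨⟨x₁, hx₁0, hx₁s, rfl⟩, hb₁⟩ S₂ ⟨⟨x₂, hx₂0, hx₂s, rfl⟩, hb₂⟩ hFeq
      obtain ⟨u₁, j₁, hu₁, hxe₁⟩ := exists_unit_rep (K := K) hϖ hx₁0
      obtain ⟨u₂, j₂, hu₂, hxe₂⟩ := exists_unit_rep (K := K) hϖ hx₂0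
      have hC := (Fmap_coset (K := K) hϖ hlev hu₁ hxe₁).symm.trans
        (hFeq.trans (Fmap_coset (K := K) hϖ hlev hu₂ hxe₂))
      have hpar : Even (j₁ - j₂) := by
        rw [Int.even_sub]
        rw [← hparity x₁ u₁ j₁ hu₁ hxe₁, ← hparity x₂ u₂ j₂ hu₂ hxe₂, hb₁, hb₂]
      exact pc_inj hchar hϖ hlev hu₁ hu₂ hxe₁ hxe₂ hC hpar
    -- split into even/odd parity classes
    have hsub : pfisterCosets K ℓ ⊆
        {S | S ∈ pfisterCosets K ℓ ∧ (S ∈ P ↔ True)} ∪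
        {S | S ∈ pfisterCosets K ℓ ∧ (S ∈ P ↔ False)} := by
      intro S hS
      by_cases h : S ∈ P
      · exact Or.inl ⟨hS, iff_of_true h trivial⟩
      · exact Or.inr ⟨hS, iff_of_false h not_false⟩
    have hbound : ∀ b : Prop, ({S | S ∈ pfisterCosets K ℓ ∧ (S ∈ P ↔ b)}).encard
        ≤ (pfisterCosets (ResidueField O) ℓ).encard := by
      intro b
      calc ({S | S ∈ pfisterCosets K ℓ ∧ (S ∈ P ↔ b)}).encard
          = (Fmap K ϖ '' {S | S ∈ pfisterCosets K ℓ ∧ (S ∈ P ↔ b)}).encard :=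
            (hinjP b).encard_image.symm
        _ ≤ (pfisterCosets (ResidueField O) ℓ).encard := by
            apply Set.encard_le_encard
            rintro c ⟨S, hS, rfl⟩
            exact hmaps S hS.1
    calc (pfisterCosets K ℓ).encard
        ≤ ({S | S ∈ pfisterCosets K ℓ ∧ (S ∈ P ↔ True)} ∪
           {S | S ∈ pfisterCosets K ℓ ∧ (S ∈ P ↔ False)}).encard := Set.encard_le_encard hsub
      _ ≤ ({S | S ∈ pfisterCosets K ℓ ∧ (S ∈ P ↔ True)}).encard +
          ({S | S ∈ pfisterCosets K ℓ ∧ (S ∈ P ↔ False)}).encard := Set.encard_union_le _ _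
      _ ≤ (pfisterCosets (ResidueField O) ℓ).encard +
          (pfisterCosets (ResidueField O) ℓ).encard := add_le_add (hbound True) (hbound False)
      _ = 2 * (pfisterCosets (ResidueField O) ℓ).encard := (two_mul _).symm

end Final
end

section
/- Let K be a field of characteristic ≠ 2 satisfying the local-global principle that every quadratic form in at least 3 variables over K isotropic over all completions at a set Ω of discrete valuations is isotropic over K. Suppose f ∈ K^× is a sum of 2^{ℓ+1} squares in K (ℓ ≥ 1), and f is a sum of 2^ℓ squares in the completion K^w for every w ∈ Ω. Then f is a sum of 2^ℓ squares in K. -/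
/-- If the sum of `n` squares form is isotropic over `K` (char ≠ 2), it is universal. -/
lemma sos_isotropic_universal {K : Type*} [Field K] (h2 : (2 : K) ≠ 0) {n : ℕ}
    (z : Fin n → K) (j0 : Fin n) (hz : z j0 ≠ 0) (hsum : ∑ j, z j ^ 2 = 0) (c : K) :
    ∃ w : Fin n → K, c = ∑ j, w j ^ 2 := by
  set t : Fin n → K := fun j => z j / z j0 with ht
  have htsum : ∑ j, t j ^ 2 = 0 := by
    have : ∑ j, t j ^ 2 = (∑ j, z j ^ 2) / (z j0) ^ 2 := by
      rw [Finset.sum_div]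
      exact Finset.sum_congr rfl fun j _ => by simp only [ht]; field_simp
    rw [this, hsum, zero_div]
  have htj0 : t j0 = 1 := div_self hz
  set B : Fin n → K := fun j => (c - 1) / 2 * t j with hB
  refine ⟨Function.update B j0 ((c + 1) / 2), ?_⟩
  have hupd : (fun j => (Function.update B j0 ((c + 1) / 2) j) ^ 2)
      = Function.update (fun j => B j ^ 2) j0 (((c + 1) / 2) ^ 2) := by
    funext j
    by_cases h : j = j0 <;> simp [Function.update, h]
  rw [hupd, Finset.sum_update_of_mem (Finset.mem_univ j0)]
  have hBsum : ∑ j, B j ^ 2 = 0 := by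
    have : ∑ j, B j ^ 2 = ((c - 1) / 2) ^ 2 * ∑ j, t j ^ 2 := by
      rw [Finset.mul_sum]; exact Finset.sum_congr rfl fun j _ => by ring
    rw [this, htsum, mul_zero]
  have hBj0 : B j0 = (c - 1) / 2 := by rw [hB]; simp [htj0]
  rw [Finset.sdiff_singleton_eq_erase, Finset.sum_erase_eq_sub (Finset.mem_univ j0),
    hBsum, hBj0]
  field_simp
  ring

/-- let `K` be a field of characteristic `≠ 2` satisfying the
local-global principle that every (diagonal) quadratic form in at least 3 variables
over `K` which is isotropic over all completions `Kw i` (at a set `Ω` of discrete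
valuations, with embeddings `f i : K →+* Kw i`) is isotropic over `K`.  If `g ∈ K^×`
is a sum of `2^(ℓ+1)` squares in `K` (`ℓ ≥ 1`) and a sum of `2^ℓ` squares in every
completion `Kw i`, then `g` is a sum of `2^ℓ` squares in `K`. -/
theorem stmt17 {K : Type*} [Field K] (hchar : (2 : K) ≠ 0)
    {ι : Type*} (Kw : ι → Type*) [∀ i, Field (Kw i)] (f : ∀ i, K →+* Kw i)
    (hlgp : ∀ n, 3 ≤ n → ∀ a : Fin n → K, (∀ j, a j ≠ 0) →
      (∀ i, ∃ x : Fin n → Kw i, (∃ j, x j ≠ 0) ∧ ∑ j, f i (a j) * x j ^ 2 = 0) →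
      ∃ x : Fin n → K, (∃ j, x j ≠ 0) ∧ ∑ j, a j * x j ^ 2 = 0)
    (ℓ : ℕ) (hℓ : 1 ≤ ℓ) (g : K) (hg0 : g ≠ 0)
    (hg : g ∈ sosN K (2 ^ (ℓ + 1)))
    (hloc : ∀ i, ∃ y : Fin (2 ^ ℓ) → Kw i, f i g = ∑ j, y j ^ 2) :
    g ∈ sosN K (2 ^ ℓ) := by
  set n := 2 ^ ℓ with hn
  have hn2 : 2 ≤ n := by
    calc 2 = 2 ^ 1 := by norm_num
    _ ≤ 2 ^ ℓ := Nat.pow_le_pow_right (by norm_num) hℓ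
  set a : Fin (n + 1) → K := Fin.snoc (fun _ => 1) (-g) with ha
  have ha0 : ∀ j, a j ≠ 0 := by
    intro j
    refine Fin.lastCases ?_ ?_ j
    · simp [ha, Fin.snoc_last, hg0]
    · intro k; simp [ha, Fin.snoc_castSucc]
  have hlocal : ∀ i, ∃ x : Fin (n + 1) → Kw i,
      (∃ j, x j ≠ 0) ∧ ∑ j, f i (a j) * x j ^ 2 = 0 := by
    intro i
    obtain ⟨y, hy⟩ := hloc i
    refine ⟨Fin.snoc y 1, ⟨Fin.last n, by simp⟩, ?_⟩
    rw [Fin.sum_univ_castSucc]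
    simp only [ha, Fin.snoc_castSucc, Fin.snoc_last, map_one, map_neg, one_mul, one_pow,
      mul_one]
    rw [← hy]
    ring
  obtain ⟨x, ⟨j1, hj1⟩, hx⟩ := hlgp (n + 1) (by omega) a ha0 hlocal
  rw [Fin.sum_univ_castSucc] at hx
  simp only [ha, Fin.snoc_castSucc, Fin.snoc_last, one_mul] at hx
  by_cases hlast : x (Fin.last n) = 0
  · -- the sum of n squares form is isotropic, hence universal
    have hj1' : ∃ k : Fin n, x k.castSucc ≠ 0 := by
      rcases Fin.eq_castSucc_or_eq_last j1 with ⟨k, rfl⟩ | rfl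
      · exact ⟨k, hj1⟩
      · exact absurd hlast hj1
    obtain ⟨k, hk⟩ := hj1'
    have hzsum : ∑ j : Fin n, (x j.castSucc) ^ 2 = 0 := by
      rw [hlast] at hx; simpa using hx
    obtain ⟨w, hw⟩ := sos_isotropic_universal hchar (fun j : Fin n => x j.castSucc) k hk hzsum g
    exact ⟨w, hw⟩
  · refine ⟨fun j => x j.castSucc / x (Fin.last n), ?_⟩
    have : ∑ j : Fin n, (x j.castSucc / x (Fin.last n)) ^ 2
        = (∑ j : Fin n, x j.castSucc ^ 2) / (x (Fin.last n)) ^ 2 := by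
      rw [Finset.sum_div]
      exact Finset.sum_congr rfl fun j _ => by field_simp
    rw [this]
    have hsum : ∑ j : Fin n, x j.castSucc ^ 2 = g * x (Fin.last n) ^ 2 := by linear_combination hx
    rw [hsum]
    field_simp
end
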